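/- arXiv:1712.00100 — 7 statements merged into one kernel-verified Lean document; each statement's English description precedes it below -/
import Mathlib

section
/- Let R be an s×s real symmetric positive definite matrix, K an n×n real symmetric positive semidefinite matrix, A an n×n real matrix and B an n×s real matrix, and set V = (R + BᵀKB)⁻¹BᵀKA and Λ = AᵀKB(R + BᵀKB)⁻¹BᵀKA. Then for every x ∈ ℝⁿ, the function u ↦ uᵀRu + (Ax + Bu)ᵀK(Ax + Bu) on ℝˢ attains its global minimum at the unique point u* = −Vx, and the minimum value equals xᵀ(AᵀKA − Λ)x. -/
open Matrix

private lemma dp_tr {m k : Type*} [Fintype m] [Fintype k]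
    (P : Matrix m k ℝ) (v : m → ℝ) (u : k → ℝ) :
    v ⬝ᵥ (P *ᵥ u) = (Pᵀ *ᵥ v) ⬝ᵥ u := by
  rw [dotProduct_mulVec, ← mulVec_transpose]

private lemma dp3 {a b c d : Type*} [Fintype a] [Fintype b] [Fintype c] [Fintype d]
    (A : Matrix a b ℝ) (P : Matrix a c ℝ) (C : Matrix c d ℝ) (x : b → ℝ) (u : d → ℝ) :
    (A *ᵥ x) ⬝ᵥ (P *ᵥ (C *ᵥ u)) = x ⬝ᵥ ((Aᵀ * P * C) *ᵥ u) := by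
  rw [mulVec_mulVec, dp_tr, dp_tr (Aᵀ * P * C) x u, mulVec_mulVec, transpose_mul,
    transpose_mul, transpose_mul, transpose_transpose, Matrix.mul_assoc]

/-- Per-stage LQR minimization: with `V = (R + BᵀKB)⁻¹BᵀKA` and
`Λ = AᵀKB(R + BᵀKB)⁻¹BᵀKA`, for every `x ∈ ℝⁿ` the map
`u ↦ uᵀRu + (Ax + Bu)ᵀK(Ax + Bu)` attains its global minimum at the unique point
`u⋆ = −Vx`, with minimum value `xᵀ(AᵀKA − Λ)x`. -/
theorem lqr_per_stage_min {n s : ℕ}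
    (R : Matrix (Fin s) (Fin s) ℝ) (K A : Matrix (Fin n) (Fin n) ℝ)
    (B : Matrix (Fin n) (Fin s) ℝ)
    (hR : R.PosDef) (hK : K.PosSemidef) :
    ∀ x : Fin n → ℝ,
      letI f : (Fin s → ℝ) → ℝ := fun u =>
        u ⬝ᵥ (R *ᵥ u) + (A *ᵥ x + B *ᵥ u) ⬝ᵥ (K *ᵥ (A *ᵥ x + B *ᵥ u))
      letI ustar : Fin s → ℝ := -(((R + Bᵀ * K * B)⁻¹ * (Bᵀ * K * A)) *ᵥ x)
      f ustar = x ⬝ᵥ ((Aᵀ * K * A - Aᵀ * K * B * (R + Bᵀ * K * B)⁻¹ * (Bᵀ * K * A)) *ᵥ x)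
        ∧ ∀ u : Fin s → ℝ, u ≠ ustar → f ustar < f u := by
  intro x
  set f : (Fin s → ℝ) → ℝ := fun u =>
    u ⬝ᵥ (R *ᵥ u) + (A *ᵥ x + B *ᵥ u) ⬝ᵥ (K *ᵥ (A *ᵥ x + B *ᵥ u)) with hf
  set M := R + Bᵀ * K * B with hMdef
  set N := Bᵀ * K * A with hNdef
  set ustar : Fin s → ℝ := -((M⁻¹ * N) *ᵥ x) with hus
  have hBKB : (Bᵀ * K * B).PosSemidef := by
    have := hK.conjTranspose_mul_mul_same B
    simpa [conjTranspose_eq_transpose_of_trivial] using this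
  have hM : M.PosDef := hR.add_posSemidef hBKB
  have hMs : Mᵀ = M := by
    simpa [conjTranspose_eq_transpose_of_trivial] using hM.isHermitian.eq
  have hKs : Kᵀ = K := by
    simpa [conjTranspose_eq_transpose_of_trivial] using hK.isHermitian.eq
  have hdet : IsUnit M.det := isUnit_iff_ne_zero.mpr hM.det_pos.ne'
  set c := N *ᵥ x with hc
  set w := M⁻¹ *ᵥ c with hw
  have hMw : M *ᵥ w = c := by
    rw [hw, mulVec_mulVec, mul_nonsing_inv _ hdet, one_mulVec]
  have hNt : Nᵀ = Aᵀ * K * B := by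
    rw [hNdef, transpose_mul, transpose_mul, transpose_transpose, hKs, ← Matrix.mul_assoc]
  have expand : ∀ u, f u = u ⬝ᵥ (M *ᵥ u) + 2 * (u ⬝ᵥ c) + x ⬝ᵥ ((Aᵀ * K * A) *ᵥ x) := by
    intro u
    have h2 : x ⬝ᵥ ((Aᵀ * K * B) *ᵥ u) = u ⬝ᵥ c := by
      rw [← hNt, dp_tr, transpose_transpose, ← hc, dotProduct_comm]
    rw [hf]
    simp only [mulVec_add, dotProduct_add, add_dotProduct]
    rw [dp3, dp3, dp3, dp3, h2, ← hNdef, ← hc, hMdef, add_mulVec, dotProduct_add]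
    ring
  have hsymm : ∀ v u, v ⬝ᵥ (M *ᵥ u) = u ⬝ᵥ (M *ᵥ v) := by
    intro v u; rw [dp_tr, hMs, dotProduct_comm]
  have key : ∀ u, f u = (u + w) ⬝ᵥ (M *ᵥ (u + w)) +
      (x ⬝ᵥ ((Aᵀ * K * A) *ᵥ x) - w ⬝ᵥ c) := by
    intro u
    have h1 : (u + w) ⬝ᵥ (M *ᵥ (u + w)) =
        u ⬝ᵥ (M *ᵥ u) + 2 * (u ⬝ᵥ c) + w ⬝ᵥ c := by
      rw [mulVec_add, dotProduct_add, add_dotProduct, add_dotProduct, hMw,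
        hsymm w u, hMw]
      ring
    rw [expand u, h1]; ring
  have hust : ustar = -w := by
    rw [hus, hw, hc, mulVec_mulVec]
  have hfus : f ustar = x ⬝ᵥ ((Aᵀ * K * A) *ᵥ x) - w ⬝ᵥ c := by
    rw [key, hust, neg_add_cancel]
    simp
  have hval : x ⬝ᵥ ((Aᵀ * K * A - Aᵀ * K * B * M⁻¹ * N) *ᵥ x)
      = x ⬝ᵥ ((Aᵀ * K * A) *ᵥ x) - w ⬝ᵥ c := by
    rw [sub_mulVec, dotProduct_sub]
    congr 1
    rw [← hNt, ← mulVec_mulVec, ← mulVec_mulVec, ← hc, ← hw, dp_tr, transpose_transpose,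
      ← hc, dotProduct_comm]
  refine ⟨by rw [hfus, ← hval], ?_⟩
  intro u hu
  rw [hfus, key u]
  have hne : u + w ≠ 0 := by
    intro h
    exact hu (by rw [hust]; exact eq_neg_of_add_eq_zero_left h)
  have := hM.dotProduct_mulVec_pos hne
  simp only [star_trivial] at this
  linarith
end

section
/- Let R be an s×s real symmetric positive definite matrix, K an n×n real symmetric positive semidefinite matrix, A an n×n real matrix and B an n×s real matrix, and set Λ = AᵀKB(R + BᵀKB)⁻¹BᵀKA. Then both Λ and AᵀKA − Λ are symmetric positive semidefinite. -/
open Matrix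

/-- With `Λ = AᵀKB(R + BᵀKB)⁻¹BᵀKA`, both `Λ` and `AᵀKA − Λ` are symmetric
positive semidefinite. -/
theorem lqr_Lambda_posSemidef {n s : ℕ}
    (R : Matrix (Fin s) (Fin s) ℝ) (K A : Matrix (Fin n) (Fin n) ℝ)
    (B : Matrix (Fin n) (Fin s) ℝ)
    (hR : R.PosDef) (hK : K.PosSemidef) :
    (Aᵀ * K * B * (R + Bᵀ * K * B)⁻¹ * (Bᵀ * K * A)).PosSemidef
      ∧ (Aᵀ * K * A - Aᵀ * K * B * (R + Bᵀ * K * B)⁻¹ * (Bᵀ * K * A)).PosSemidef := by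
  set M := R + Bᵀ * K * B with hMdef
  have hBKB : (Bᵀ * K * B).PosSemidef := by
    have := hK.conjTranspose_mul_mul_same B
    simpa using this
  have hM : M.PosDef := hR.add_posSemidef hBKB
  have hMinv : M⁻¹.PosDef := hM.inv
  have hKsymm : Kᵀ = K := hK.isHermitian.eq
  have hMinvsymm : (M⁻¹)ᵀ = M⁻¹ := hMinv.isHermitian.eq
  set C := Bᵀ * K * A with hCdef
  have hCT : Cᵀ = Aᵀ * K * B := by
    simp [hCdef, Matrix.transpose_mul, hKsymm, Matrix.mul_assoc]
  have hLam : Aᵀ * K * B * M⁻¹ * (Bᵀ * K * A) = Cᴴ * M⁻¹ * C := by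
    simp [hCT]
    rfl
  have h1 : (Aᵀ * K * B * M⁻¹ * (Bᵀ * K * A)).PosSemidef := by
    rw [hLam]
    exact hMinv.posSemidef.conjTranspose_mul_mul_same C
  refine ⟨h1, ?_⟩
  set X := -(M⁻¹ * C) with hXdef
  have hMM : M⁻¹ * M * M⁻¹ = M⁻¹ := by
    rw [Matrix.nonsing_inv_mul M ((Matrix.isUnit_iff_isUnit_det M).mp hM.isUnit), Matrix.one_mul]
  have hXH : Xᴴ = -(Cᵀ * M⁻¹) := by
    simp [hXdef, Matrix.transpose_mul, hMinvsymm]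
  have hABXH : (A + B * X)ᴴ = Aᵀ - Cᵀ * M⁻¹ * Bᵀ := by
    simp only [conjTranspose_eq_transpose_of_trivial, Matrix.transpose_add,
      Matrix.transpose_mul, hXdef, Matrix.transpose_neg, hMinvsymm]
    rw [sub_eq_add_neg]
    congr 1
    simp [Matrix.mul_assoc]
  have h6 : Bᵀ * (K * A) = C := by rw [hCdef, Matrix.mul_assoc]
  have h5 : Aᵀ * (K * (B * (M⁻¹ * C))) = Cᵀ * (M⁻¹ * C) := by
    rw [← Matrix.mul_assoc, ← Matrix.mul_assoc, ← hCT]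
  have h7 : Bᵀ * (K * (B * (M⁻¹ * C))) = Bᵀ * K * B * (M⁻¹ * C) := by
    simp [Matrix.mul_assoc]
  have hsum : Cᵀ * (M⁻¹ * (R * (M⁻¹ * C))) + Cᵀ * (M⁻¹ * (Bᵀ * (K * (B * (M⁻¹ * C)))))
      = Cᵀ * (M⁻¹ * C) := by
    rw [h7, ← Matrix.mul_add, ← Matrix.mul_add, ← Matrix.add_mul, ← hMdef]
    congr 1
    rw [← Matrix.mul_assoc, ← Matrix.mul_assoc, hMM]
  have key : Xᴴ * R * X + (A + B * X)ᴴ * K * (A + B * X)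
      = Aᵀ * K * A - Cᵀ * M⁻¹ * C := by
    rw [hXH, hABXH, hXdef]
    simp only [Matrix.sub_mul, Matrix.mul_sub, Matrix.add_mul, Matrix.mul_add,
      Matrix.neg_mul, Matrix.mul_neg, neg_neg, Matrix.mul_assoc, h6, h5]
    rw [← hsum]
    abel
  have hfinal : (Aᵀ * K * A - Aᵀ * K * B * M⁻¹ * (Bᵀ * K * A)).PosSemidef := by
    have : Aᵀ * K * B * M⁻¹ * (Bᵀ * K * A) = Cᵀ * M⁻¹ * C := by
      rw [hCT]
    rw [this, ← key]
    exact (hR.posSemidef.conjTranspose_mul_mul_same X).add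
      (hK.conjTranspose_mul_mul_same (A + B * X))
  exact hfinal
end

section
/- Let N ≥ 1, and for k = 0, …, N let Qₖ be n×n real symmetric positive semidefinite matrices, and for k = 0, …, N−1 let Rₖ be s×s real symmetric positive definite matrices, Aₖ be n×n real matrices, Bₖ be n×s real matrices, and pₖ ∈ [0,1]. Define recursively K_N = Q_N and, for k = N−1 down to 0, Λₖ = AₖᵀK_{k+1}Bₖ(Rₖ + BₖᵀK_{k+1}Bₖ)⁻¹BₖᵀK_{k+1}Aₖ, Lₖ = Qₖ + AₖᵀK_{k+1}Aₖ, and Kₖ = Lₖ − pₖΛₖ. Then for every k ∈ {0, …, N}, the matrices Kₖ, and for every k ∈ {0, …, N−1} the matrices Lₖ, Λₖ, and Lₖ − Λₖ, are all symmetric positive semidefinite. -/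
open Matrix


lemma psd_smul {n : ℕ} {c : ℝ} (hc : 0 ≤ c) {M : Matrix (Fin n) (Fin n) ℝ}
    (h : M.PosSemidef) : (c • M).PosSemidef := by
  refine ⟨?_, fun x => ?_⟩
  · unfold Matrix.IsHermitian
    rw [conjTranspose_smul, h.1.eq]
    simp
  · exact (h.smul hc).2 x

lemma riccati_step {n s : ℕ} {K1 : Matrix (Fin n) (Fin n) ℝ} (hK1 : K1.PosSemidef)
    {Rk : Matrix (Fin s) (Fin s) ℝ} (hRk : Rk.PosDef)
    (Ak : Matrix (Fin n) (Fin n) ℝ) (Bk : Matrix (Fin n) (Fin s) ℝ) :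
    (Akᵀ * K1 * Bk * (Rk + Bkᵀ * K1 * Bk)⁻¹ * (Bkᵀ * K1 * Ak)).PosSemidef ∧
      (Akᵀ * K1 * Ak - Akᵀ * K1 * Bk * (Rk + Bkᵀ * K1 * Bk)⁻¹
        * (Bkᵀ * K1 * Ak)).PosSemidef := by
  have hct : ∀ {a b : ℕ} (X : Matrix (Fin a) (Fin b) ℝ), Xᴴ = Xᵀ :=
    fun X => conjTranspose_eq_transpose_of_trivial X
  set M := Rk + Bkᵀ * K1 * Bk with hMdef
  have hBKB : (Bkᵀ * K1 * Bk).PosSemidef := by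
    rw [← hct Bk]; exact hK1.conjTranspose_mul_mul_same Bk
  have hM : M.PosDef := hRk.add_posSemidef hBKB
  have hMdet : IsUnit M.det := isUnit_iff_ne_zero.mpr hM.det_pos.ne'
  set S := M⁻¹ with hSdef
  have hS : S.PosSemidef := hM.posSemidef.inv
  have hSsymm : Sᵀ = S := by rw [← hct S]; exact hS.1
  have hK1symm : K1ᵀ = K1 := by rw [← hct K1]; exact hK1.1
  set C := Bkᵀ * K1 * Ak with hCdef
  have hCt : Akᵀ * K1 * Bk = Cᵀ := by
    rw [hCdef, transpose_mul, transpose_mul, transpose_transpose, hK1symm, Matrix.mul_assoc]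
  have hSM : S * M = 1 := nonsing_inv_mul M hMdet
  set W := S * C with hWdef
  have hWt : Wᵀ = Cᵀ * S := by rw [hWdef, transpose_mul, hSsymm]
  have hΛpsd : (Cᵀ * S * C).PosSemidef := by
    rw [← hct C]; exact hS.conjTranspose_mul_mul_same C
  have hKpsd : ((Ak - Bk * W)ᵀ * K1 * (Ak - Bk * W)).PosSemidef := by
    rw [← hct]; exact hK1.conjTranspose_mul_mul_same _
  have hRpsd : (Wᵀ * Rk * W).PosSemidef := by
    rw [← hct]; exact hRk.posSemidef.conjTranspose_mul_mul_same _
  have h1 : Akᵀ * K1 * (Bk * W) = Cᵀ * S * C := by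
    rw [← Matrix.mul_assoc, hCt, hWdef, Matrix.mul_assoc]
  have h2 : Wᵀ * (Bkᵀ * K1 * Ak) = Cᵀ * S * C := by
    rw [hWt, ← hCdef, Matrix.mul_assoc]
  have hMS : M * S = 1 := mul_nonsing_inv M hMdet
  have h3 : Wᵀ * (Bkᵀ * K1 * Bk) * W + Wᵀ * Rk * W = Cᵀ * S * C := by
    rw [← Matrix.add_mul, ← Matrix.mul_add, hWt, Matrix.mul_assoc,
      show Bkᵀ * K1 * Bk + Rk = M by rw [hMdef, add_comm],
      hWdef, ← Matrix.mul_assoc M S C, hMS, Matrix.one_mul]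
  have key : Akᵀ * K1 * Ak - Cᵀ * S * C
      = (Ak - Bk * W)ᵀ * K1 * (Ak - Bk * W) + Wᵀ * Rk * W := by
    have e1 : Akᵀ * (K1 * (Bk * W)) = Cᵀ * (S * C) := by
      simpa only [← Matrix.mul_assoc] using h1
    have e2 : Wᵀ * (Bkᵀ * (K1 * Ak)) = Cᵀ * (S * C) := by
      simpa only [← Matrix.mul_assoc] using h2
    have e3 : Wᵀ * (Bkᵀ * (K1 * (Bk * W))) + Wᵀ * (Rk * W) = Cᵀ * (S * C) := by
      simpa only [← Matrix.mul_assoc] using h3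
    simp only [transpose_sub, transpose_mul, Matrix.sub_mul, Matrix.mul_sub,
      Matrix.mul_assoc]
    rw [e1, e2, ← e3]
    abel
  refine ⟨?_, ?_⟩
  · rw [hCt]
    exact hΛpsd
  · rw [hCt, key]
    exact hKpsd.add hRpsd
/-- Riccati-type recursion of Theorem 1: `K_N = Q_N`,
`Λ_k = AₖᵀK_{k+1}Bₖ(Rₖ + BₖᵀK_{k+1}Bₖ)⁻¹BₖᵀK_{k+1}Aₖ`, `L_k = Qₖ + AₖᵀK_{k+1}Aₖ`,
`K_k = L_k − pₖΛ_k` with `pₖ ∈ [0,1]`.  Then all the matrices `K_k` (`0 ≤ k ≤ N`) and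
`L_k`, `Λ_k`, `L_k − Λ_k` (`0 ≤ k < N`) are symmetric positive semidefinite. -/
theorem riccati_recursion_posSemidef {n s : ℕ} (N : ℕ) (hN : 1 ≤ N)
    (Q : ℕ → Matrix (Fin n) (Fin n) ℝ)
    (R : ℕ → Matrix (Fin s) (Fin s) ℝ)
    (A : ℕ → Matrix (Fin n) (Fin n) ℝ)
    (B : ℕ → Matrix (Fin n) (Fin s) ℝ)
    (p : ℕ → ℝ)
    (hQ : ∀ k ≤ N, (Q k).PosSemidef)
    (hR : ∀ k < N, (R k).PosDef)
    (hp : ∀ k < N, p k ∈ Set.Icc (0 : ℝ) 1)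
    (K L Λ : ℕ → Matrix (Fin n) (Fin n) ℝ)
    (hKN : K N = Q N)
    (hΛ : ∀ k < N,
      Λ k = (A k)ᵀ * K (k + 1) * B k * (R k + (B k)ᵀ * K (k + 1) * B k)⁻¹
              * ((B k)ᵀ * K (k + 1) * A k))
    (hL : ∀ k < N, L k = Q k + (A k)ᵀ * K (k + 1) * A k)
    (hK : ∀ k < N, K k = L k - p k • Λ k) :
    (∀ k ≤ N, (K k).PosSemidef) ∧
      (∀ k < N, (L k).PosSemidef ∧ (Λ k).PosSemidef ∧ (L k - Λ k).PosSemidef) := by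
  have hstep : ∀ k < N, (K (k + 1)).PosSemidef →
      (L k).PosSemidef ∧ (Λ k).PosSemidef ∧ (L k - Λ k).PosSemidef ∧ (K k).PosSemidef := by
    intro k hk hK1
    obtain ⟨hΛ', hdiff⟩ := riccati_step hK1 (hR k hk) (A k) (B k)
    have hAKA : ((A k)ᵀ * K (k + 1) * A k).PosSemidef := by
      rw [← conjTranspose_eq_transpose_of_trivial (A k)]
      exact hK1.conjTranspose_mul_mul_same (A k)
    have hLpsd : (L k).PosSemidef := by
      rw [hL k hk]; exact (hQ k hk.le).add hAKA
    have hΛpsd : (Λ k).PosSemidef := by rw [hΛ k hk]; exact hΛ'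
    have hLmΛ : (L k - Λ k).PosSemidef := by
      rw [hL k hk, hΛ k hk, add_sub_assoc]
      exact (hQ k hk.le).add hdiff
    refine ⟨hLpsd, hΛpsd, hLmΛ, ?_⟩
    have hsplit : L k - p k • Λ k = (L k - Λ k) + (1 - p k) • Λ k := by
      rw [sub_smul, one_smul]; abel
    rw [hK k hk, hsplit]
    exact hLmΛ.add (psd_smul (by linarith [(hp k hk).2]) hΛpsd)
  have hKall : ∀ d : ℕ, (K (N - d)).PosSemidef := by
    intro d
    induction d with
    | zero => simpa [hKN] using hQ N le_rfl
    | succ d ih =>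
      rcases le_or_gt N d with h | h
      · rwa [Nat.sub_eq_zero_of_le (h.trans (Nat.le_succ d)),
          ← Nat.sub_eq_zero_of_le h]
      · have hk : N - (d + 1) < N := by omega
        have h1 : N - (d + 1) + 1 = N - d := by omega
        exact (hstep _ hk (by rw [h1]; exact ih)).2.2.2
  have hKle : ∀ k ≤ N, (K k).PosSemidef := by
    intro k hk
    have := hKall (N - k)
    rwa [Nat.sub_sub_self hk] at this
  refine ⟨hKle, fun k hk => ?_⟩
  obtain ⟨a, b, c, _⟩ := hstep k hk (hKle (k + 1) hk)
  exact ⟨a, b, c⟩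
end

section
/- Let Q and K' be n×n real symmetric positive semidefinite matrices, R an s×s real symmetric positive definite matrix, A an n×n real matrix, B an n×s real matrix, and p ∈ [0,1]. Set Λ = AᵀK'B(R + BᵀK'B)⁻¹BᵀK'A, L = Q + AᵀK'A, and K = L − pΛ. Let w : Ω → ℝⁿ be a zero-mean random vector with covariance matrix W (components square-integrable). Then for every x ∈ ℝⁿ: xᵀKx + tr(K'W) = p·( xᵀQx + inf over u ∈ ℝˢ of [ uᵀRu + E[(Ax + Bu + w)ᵀK'(Ax + Bu + w)] ] ) + (1−p)·( xᵀQx + E[(Ax + w)ᵀK'(Ax + w)] ), and the infimum is attained at u = −(R + BᵀK'B)⁻¹BᵀK'A x. -/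
open Matrix MeasureTheory ENNReal

private lemma dp_mulVec {m k : ℕ} (M : Matrix (Fin m) (Fin k) ℝ) (u : Fin k → ℝ) (v : Fin m → ℝ) :
    (M *ᵥ u) ⬝ᵥ v = u ⬝ᵥ (Mᵀ *ᵥ v) := by
  rw [dotProduct_mulVec, vecMul_transpose, dotProduct_comm]

private lemma l2_mul_integrable {Ω : Type*} [MeasurableSpace Ω] (μ : Measure Ω)
    {f g : Ω → ℝ} (hf : MemLp f 2 μ) (hg : MemLp g 2 μ) :
    Integrable (fun ω => f ω * g ω) μ := by
  have h : (1 : ℝ≥0∞) / 1 = 1 / 2 + 1 / 2 := by rw [ENNReal.add_halves]; norm_num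
  exact memLp_one_iff_integrable.mp
    (haveI : ENNReal.HolderTriple 2 2 1 := ⟨ENNReal.inv_two_add_inv_two.trans inv_one.symm⟩; hg.smul hf)

private lemma quad_decomp {s : ℕ} {S : Matrix (Fin s) (Fin s) ℝ} (hSsymm : Sᵀ = S)
    (c u u0 : Fin s → ℝ) (h : S *ᵥ u0 = -c) :
    u ⬝ᵥ (S *ᵥ u) + 2 * (u ⬝ᵥ c) = (u - u0) ⬝ᵥ (S *ᵥ (u - u0)) + u0 ⬝ᵥ c := by
  have key : u0 ⬝ᵥ (S *ᵥ u) = u ⬝ᵥ (S *ᵥ u0) := by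
    rw [dotProduct_comm, dp_mulVec, hSsymm]
  rw [mulVec_sub, dotProduct_sub, sub_dotProduct, sub_dotProduct, key, h,
    dotProduct_neg, dotProduct_neg]
  ring

private lemma integral_quad {n : ℕ} {Ω : Type*} [MeasurableSpace Ω] (μ : Measure Ω)
    [IsProbabilityMeasure μ] (K' W : Matrix (Fin n) (Fin n) ℝ)
    (w : Ω → Fin n → ℝ)
    (hL2 : ∀ i, MemLp (fun ω => w ω i) 2 μ)
    (hmean : ∀ i, ∫ ω, w ω i ∂μ = 0)
    (hcov : ∀ i j, ∫ ω, w ω i * w ω j ∂μ = W i j)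
    (v : Fin n → ℝ) :
    ∫ ω, (v + w ω) ⬝ᵥ (K' *ᵥ (v + w ω)) ∂μ
      = v ⬝ᵥ (K' *ᵥ v) + ∑ i, ∑ j, K' i j * W i j := by
  have hv2 : ∀ i, MemLp (fun ω => v i + w ω i) 2 μ :=
    fun i => (memLp_const (v i)).add (hL2 i)
  have hint : ∀ i j, Integrable (fun ω => (v i + w ω i) * (v j + w ω j)) μ :=
    fun i j => l2_mul_integrable μ (hv2 i) (hv2 j)
  have hwint : ∀ i, Integrable (fun ω => w ω i) μ :=
    fun i => (hL2 i).integrable one_le_two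
  have hval : ∀ i j, ∫ ω, (v i + w ω i) * (v j + w ω j) ∂μ = v i * v j + W i j := by
    intro i j
    have h1 : (fun ω => (v i + w ω i) * (v j + w ω j))
        = fun ω => v i * v j + (v i * w ω j + (w ω i * v j + w ω i * w ω j)) := by
      funext ω; ring
    have hA1 : Integrable (fun ω => v i * w ω j) μ := (hwint j).const_mul (v i)
    have hA2 : Integrable (fun ω => w ω i * v j) μ := (hwint i).mul_const (v j)
    have hA3 : Integrable (fun ω => w ω i * w ω j) μ := l2_mul_integrable μ (hL2 i) (hL2 j)
    have hA23 : Integrable (fun ω => w ω i * v j + w ω i * w ω j) μ := hA2.add hA3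
    have hA123 : Integrable (fun ω => v i * w ω j + (w ω i * v j + w ω i * w ω j)) μ :=
      hA1.add hA23
    rw [h1, integral_add (integrable_const _) hA123,
      integral_add hA1 hA23, integral_add hA2 hA3,
      integral_const, integral_const_mul, integral_mul_const, hmean, hmean, hcov]
    simp
  have hpt : ∀ ω, (v + w ω) ⬝ᵥ (K' *ᵥ (v + w ω))
      = ∑ i, ∑ j, K' i j * ((v i + w ω i) * (v j + w ω j)) := by
    intro ω
    simp only [dotProduct, mulVec, Pi.add_apply, Finset.mul_sum]
    exact Finset.sum_congr rfl fun i _ => Finset.sum_congr rfl fun j _ => by ring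
  calc ∫ ω, (v + w ω) ⬝ᵥ (K' *ᵥ (v + w ω)) ∂μ
      = ∫ ω, ∑ i, ∑ j, K' i j * ((v i + w ω i) * (v j + w ω j)) ∂μ := by
        simp_rw [hpt]
    _ = ∑ i, ∑ j, K' i j * (v i * v j + W i j) := by
        rw [integral_finset_sum _ (fun i _ =>
          integrable_finset_sum _ (fun j _ => (hint i j).const_mul (K' i j)))]
        refine Finset.sum_congr rfl fun i _ => ?_
        rw [integral_finset_sum _ (fun j _ => (hint i j).const_mul (K' i j))]
        refine Finset.sum_congr rfl fun j _ => ?_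
        rw [integral_const_mul, hval]
    _ = v ⬝ᵥ (K' *ᵥ v) + ∑ i, ∑ j, K' i j * W i j := by
        have hdp : v ⬝ᵥ (K' *ᵥ v) = ∑ i, ∑ j, K' i j * (v i * v j) := by
          simp only [dotProduct, mulVec, Finset.mul_sum]
          exact Finset.sum_congr rfl fun i _ => Finset.sum_congr rfl fun j _ => by ring
        rw [hdp, ← Finset.sum_add_distrib]
        refine Finset.sum_congr rfl fun i _ => ?_
        rw [← Finset.sum_add_distrib]
        exact Finset.sum_congr rfl fun j _ => by rw [mul_add]

/-- One-step Bellman recursion of Theorem 1 (fully observed states, perfect match,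
symmetric reliability): with `Λ = AᵀK'B(R + BᵀK'B)⁻¹BᵀK'A`, `L = Q + AᵀK'A`,
`K = L − pΛ`, and `w` a zero-mean random vector with covariance `W`, for every `x`:
`xᵀKx + tr(K'W) = p(xᵀQx + inf_u [uᵀRu + E[(Ax + Bu + w)ᵀK'(Ax + Bu + w)]])`
`+ (1 − p)(xᵀQx + E[(Ax + w)ᵀK'(Ax + w)])`, the infimum being attained at
`u = −(R + BᵀK'B)⁻¹BᵀK'A x`. -/
theorem bellman_one_step_full_info {n s : ℕ}
    {Ω : Type*} [MeasurableSpace Ω] (μ : Measure Ω) [IsProbabilityMeasure μ]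
    (Q K' : Matrix (Fin n) (Fin n) ℝ) (R : Matrix (Fin s) (Fin s) ℝ)
    (A : Matrix (Fin n) (Fin n) ℝ) (B : Matrix (Fin n) (Fin s) ℝ)
    (p : ℝ) (hp : p ∈ Set.Icc (0 : ℝ) 1)
    (hQ : Q.PosSemidef) (hK' : K'.PosSemidef) (hR : R.PosDef)
    (w : Ω → Fin n → ℝ) (W : Matrix (Fin n) (Fin n) ℝ)
    (hL2 : ∀ i, MemLp (fun ω => w ω i) 2 μ)
    (hmean : ∀ i, ∫ ω, w ω i ∂μ = 0)
    (hcov : ∀ i j, ∫ ω, w ω i * w ω j ∂μ = W i j) :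
    ∀ x : Fin n → ℝ,
      letI Λ : Matrix (Fin n) (Fin n) ℝ :=
        Aᵀ * K' * B * (R + Bᵀ * K' * B)⁻¹ * (Bᵀ * K' * A)
      letI L : Matrix (Fin n) (Fin n) ℝ := Q + Aᵀ * K' * A
      letI K : Matrix (Fin n) (Fin n) ℝ := L - p • Λ
      letI g : (Fin s → ℝ) → ℝ := fun u =>
        u ⬝ᵥ (R *ᵥ u)
          + ∫ ω, (A *ᵥ x + B *ᵥ u + w ω) ⬝ᵥ (K' *ᵥ (A *ᵥ x + B *ᵥ u + w ω)) ∂μ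
      (x ⬝ᵥ (K *ᵥ x) + (K' * W).trace
          = p * (x ⬝ᵥ (Q *ᵥ x) + ⨅ u : Fin s → ℝ, g u)
            + (1 - p) * (x ⬝ᵥ (Q *ᵥ x)
                + ∫ ω, (A *ᵥ x + w ω) ⬝ᵥ (K' *ᵥ (A *ᵥ x + w ω)) ∂μ))
        ∧ (⨅ u : Fin s → ℝ, g u) = g (-(((R + Bᵀ * K' * B)⁻¹ * (Bᵀ * K' * A)) *ᵥ x)) := by
  intro x
  dsimp only
  -- symmetry facts
  have hK's : K'ᵀ = K' := by
    have := hK'.isHermitian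
    rwa [Matrix.IsHermitian, conjTranspose_eq_transpose_of_trivial] at this
  have hRs : Rᵀ = R := by
    have := hR.1
    rwa [Matrix.IsHermitian, conjTranspose_eq_transpose_of_trivial] at this
  set S : Matrix (Fin s) (Fin s) ℝ := R + Bᵀ * K' * B with hSdef
  have hBKB : (Bᵀ * K' * B).PosSemidef := by
    have := hK'.conjTranspose_mul_mul_same B
    rwa [conjTranspose_eq_transpose_of_trivial] at this
  have hS : S.PosDef := hR.add_posSemidef hBKB
  have hSsymm : Sᵀ = S := by
    rw [hSdef, transpose_add, hRs, transpose_mul, transpose_mul, transpose_transpose,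
      hK's, Matrix.mul_assoc]
  have hdet : IsUnit S.det := (Matrix.isUnit_iff_isUnit_det S).mp hS.isUnit
  set c : Fin s → ℝ := (Bᵀ * K' * A) *ᵥ x with hcdef
  set u0 : Fin s → ℝ := -((S⁻¹ * (Bᵀ * K' * A)) *ᵥ x) with hu0def
  have hu0 : u0 = -(S⁻¹ *ᵥ c) := by rw [hu0def, hcdef, mulVec_mulVec]
  have hSu0 : S *ᵥ u0 = -c := by
    rw [hu0, mulVec_neg, mulVec_mulVec, Matrix.mul_nonsing_inv S hdet, one_mulVec]
  set v0 : Fin n → ℝ := A *ᵥ x with hv0def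
  set T : ℝ := ∑ i, ∑ j, K' i j * W i j with hTdef
  have hInt : ∀ v : Fin n → ℝ,
      ∫ ω, (v + w ω) ⬝ᵥ (K' *ᵥ (v + w ω)) ∂μ = v ⬝ᵥ (K' *ᵥ v) + T :=
    integral_quad μ K' W w hL2 hmean hcov
  set g : (Fin s → ℝ) → ℝ := fun u =>
    u ⬝ᵥ (R *ᵥ u)
      + ∫ ω, (v0 + B *ᵥ u + w ω) ⬝ᵥ (K' *ᵥ (v0 + B *ᵥ u + w ω)) ∂μ with hgdef
  -- value of g
  have hgval : ∀ u, g u =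
      (u - u0) ⬝ᵥ (S *ᵥ (u - u0)) + (u0 ⬝ᵥ c + (v0 ⬝ᵥ (K' *ᵥ v0) + T)) := by
    intro u
    have cross2 : (B *ᵥ u) ⬝ᵥ (K' *ᵥ v0) = u ⬝ᵥ c := by
      rw [hv0def, hcdef, mulVec_mulVec, dp_mulVec, mulVec_mulVec, ← Matrix.mul_assoc]
    have cross1 : v0 ⬝ᵥ (K' *ᵥ (B *ᵥ u)) = u ⬝ᵥ c := by
      rw [hv0def, hcdef, dotProduct_comm, mulVec_mulVec, dp_mulVec, mulVec_mulVec,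
        transpose_mul, hK's]
    have quad : (B *ᵥ u) ⬝ᵥ (K' *ᵥ (B *ᵥ u)) = u ⬝ᵥ ((Bᵀ * K' * B) *ᵥ u) := by
      rw [mulVec_mulVec, dp_mulVec, mulVec_mulVec, ← Matrix.mul_assoc]
    have hSu : u ⬝ᵥ (R *ᵥ u) + u ⬝ᵥ ((Bᵀ * K' * B) *ᵥ u) = u ⬝ᵥ (S *ᵥ u) := by
      rw [hSdef, add_mulVec, dotProduct_add]
    have e1 : (v0 + B *ᵥ u) ⬝ᵥ (K' *ᵥ (v0 + B *ᵥ u))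
        = v0 ⬝ᵥ (K' *ᵥ v0) + 2 * (u ⬝ᵥ c) + u ⬝ᵥ ((Bᵀ * K' * B) *ᵥ u) := by
      rw [mulVec_add, dotProduct_add, add_dotProduct, add_dotProduct,
        cross1, cross2, quad]
      ring
    calc g u = u ⬝ᵥ (R *ᵥ u)
        + ∫ ω, ((v0 + B *ᵥ u) + w ω) ⬝ᵥ (K' *ᵥ ((v0 + B *ᵥ u) + w ω)) ∂μ := rfl
      _ = u ⬝ᵥ (R *ᵥ u) + ((v0 + B *ᵥ u) ⬝ᵥ (K' *ᵥ (v0 + B *ᵥ u)) + T) := by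
          rw [hInt (v0 + B *ᵥ u)]
      _ = (u ⬝ᵥ (S *ᵥ u) + 2 * (u ⬝ᵥ c)) + (v0 ⬝ᵥ (K' *ᵥ v0) + T) := by
          rw [e1, ← hSu]; ring
      _ = (u - u0) ⬝ᵥ (S *ᵥ (u - u0)) + (u0 ⬝ᵥ c + (v0 ⬝ᵥ (K' *ᵥ v0) + T)) := by
          rw [quad_decomp hSsymm c u u0 hSu0]; ring
  have hgu0 : g u0 = u0 ⬝ᵥ c + (v0 ⬝ᵥ (K' *ᵥ v0) + T) := by
    rw [hgval u0, sub_self, mulVec_zero, dotProduct_zero, zero_add]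
  have hq0 : ∀ u : Fin s → ℝ, 0 ≤ (u - u0) ⬝ᵥ (S *ᵥ (u - u0)) := by
    intro u
    have := hS.posSemidef.dotProduct_mulVec_nonneg (u - u0)
    simpa using this
  have hmin : ∀ u, g u0 ≤ g u := by
    intro u
    rw [hgu0, hgval u]
    nlinarith [hq0 u]
  have hinf : (⨅ u : Fin s → ℝ, g u) = g u0 := by
    refine le_antisymm (ciInf_le ⟨g u0, ?_⟩ u0) (le_ciInf hmin)
    rintro y ⟨u, rfl⟩
    exact hmin u
  -- trace
  have hWs : ∀ i j, W i j = W j i := by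
    intro i j
    rw [← hcov i j, ← hcov j i]
    simp_rw [mul_comm]
  have htr : (K' * W).trace = T := by
    rw [hTdef]
    simp only [Matrix.trace, Matrix.diag, Matrix.mul_apply]
    exact Finset.sum_congr rfl fun i _ => Finset.sum_congr rfl fun j _ => by
      rw [hWs j i]
  -- quadratic forms in x
  have hAKA : x ⬝ᵥ ((Aᵀ * K' * A) *ᵥ x) = v0 ⬝ᵥ (K' *ᵥ v0) := by
    rw [hv0def, ← mulVec_mulVec, ← mulVec_mulVec, ← dp_mulVec]
  have hLam : x ⬝ᵥ ((Aᵀ * K' * B * S⁻¹ * (Bᵀ * K' * A)) *ᵥ x) = -(u0 ⬝ᵥ c) := by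
    have h1 : (Aᵀ * K' * B * S⁻¹ * (Bᵀ * K' * A)) *ᵥ x
        = (Aᵀ * K' * B) *ᵥ (-u0) := by
      rw [hu0, neg_neg, ← mulVec_mulVec, ← mulVec_mulVec, hcdef]
    rw [h1, dotProduct_comm, dp_mulVec, transpose_mul, transpose_mul,
      transpose_transpose, hK's, ← Matrix.mul_assoc, neg_dotProduct, hcdef]
  have hxK : x ⬝ᵥ ((Q + Aᵀ * K' * A - p • (Aᵀ * K' * B * S⁻¹ * (Bᵀ * K' * A))) *ᵥ x)
      = x ⬝ᵥ (Q *ᵥ x) + v0 ⬝ᵥ (K' *ᵥ v0) + p * (u0 ⬝ᵥ c) := by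
    rw [Matrix.sub_mulVec, add_mulVec, dotProduct_sub, dotProduct_add, hAKA,
      smul_mulVec, dotProduct_smul, smul_eq_mul, hLam]
    ring
  refine ⟨?_, hinf⟩
  rw [hinf, htr, hxK, hgu0, hInt v0]
  ring
end

section
/- Let N ≥ 1, p ∈ [0,1], and for k = 0,…,N let Qₖ be n×n real symmetric positive semidefinite matrices; for k = 0,…,N−1 let Rₖ be s×s real symmetric positive definite matrices, Aₖ n×n real matrices, Bₖ n×s real matrices, and Wₖ n×n real symmetric positive semidefinite matrices. Define recursively K_N = Q_N, Vₖ = (Rₖ + BₖᵀK_{k+1}Bₖ)⁻¹BₖᵀK_{k+1}Aₖ, Λₖ = AₖᵀK_{k+1}BₖVₖ, Lₖ = Qₖ + AₖᵀK_{k+1}Aₖ, Kₖ = Lₖ − pΛₖ. For θ ∈ {0,1} define J_N(x,θ) = xᵀQ_Nx and, for k < N, Jₖ(x,θ) = xᵀ(Lₖ − θΛₖ)x + Σ_{j=k}^{N−1} tr(K_{j+1}Wⱼ). Let wₖ be zero-mean random vectors with covariance Wₖ. Then for every k < N and x ∈ ℝⁿ: (i) Jₖ(x,1) = xᵀQₖx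 + inf over u ∈ ℝˢ of [ uᵀRₖu + p·E[J_{k+1}(Aₖx + Bₖu + wₖ, 1)] + (1−p)·E[J_{k+1}(Aₖx + Bₖu + wₖ, 0)] ], with the infimum attained at u = −Vₖx; and (ii) Jₖ(x,0) = xᵀQₖx + p·E[J_{k+1}(Aₖx + wₖ, 1)] + (1−p)·E[J_{k+1}(Aₖx + wₖ, 0)]. -/
open Matrix MeasureTheory

private lemma dpt {n s : ℕ} (B : Matrix (Fin n) (Fin s) ℝ) (u : Fin s → ℝ) (z : Fin n → ℝ) :
    u ⬝ᵥ (Bᵀ *ᵥ z) = (B *ᵥ u) ⬝ᵥ z := by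
  rw [Matrix.dotProduct_mulVec, Matrix.vecMul_transpose]

private lemma dps {n : ℕ} {M : Matrix (Fin n) (Fin n) ℝ} (hM : Mᵀ = M) (v w : Fin n → ℝ) :
    v ⬝ᵥ (M *ᵥ w) = w ⬝ᵥ (M *ᵥ v) := by
  conv_lhs => rw [← hM]
  rw [dpt, dotProduct_comm]

private lemma starv {n : ℕ} (v : Fin n → ℝ) : star v = v := by
  funext i; simp

private lemma herm_t {n : ℕ} {M : Matrix (Fin n) (Fin n) ℝ} (h : M.IsHermitian) : Mᵀ = M := by
  rwa [Matrix.IsHermitian, Matrix.conjTranspose_eq_transpose_of_trivial] at h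

private lemma quadsub {n : ℕ} (X Y : Matrix (Fin n) (Fin n) ℝ) (v : Fin n → ℝ) :
    v ⬝ᵥ ((X - Y) *ᵥ v) = v ⬝ᵥ (X *ᵥ v) - v ⬝ᵥ (Y *ᵥ v) := by
  rw [Matrix.sub_mulVec, dotProduct_sub]

private lemma quadadd {n : ℕ} (X Y : Matrix (Fin n) (Fin n) ℝ) (v : Fin n → ℝ) :
    v ⬝ᵥ ((X + Y) *ᵥ v) = v ⬝ᵥ (X *ᵥ v) + v ⬝ᵥ (Y *ᵥ v) := by
  rw [Matrix.add_mulVec, dotProduct_add]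

private lemma quadsmul {n : ℕ} (c : ℝ) (X : Matrix (Fin n) (Fin n) ℝ) (v : Fin n → ℝ) :
    v ⬝ᵥ ((c • X) *ᵥ v) = c * (v ⬝ᵥ (X *ᵥ v)) := by
  rw [Matrix.smul_mulVec, dotProduct_smul, smul_eq_mul]

private lemma quadAMA {n : ℕ} (A M : Matrix (Fin n) (Fin n) ℝ) (v : Fin n → ℝ) :
    v ⬝ᵥ ((Aᵀ * M * A) *ᵥ v) = (A *ᵥ v) ⬝ᵥ (M *ᵥ (A *ᵥ v)) := by
  rw [← Matrix.mulVec_mulVec, ← Matrix.mulVec_mulVec, dpt]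

private lemma trace_sum {n : ℕ} (M Wc : Matrix (Fin n) (Fin n) ℝ) (hWt : Wcᵀ = Wc) :
    (M * Wc).trace = ∑ i, ∑ j, M i j * Wc i j := by
  simp only [Matrix.trace, Matrix.diag, Matrix.mul_apply]
  refine Finset.sum_congr rfl fun i _ => Finset.sum_congr rfl fun j _ => ?_
  have h2 : Wc j i = Wc i j := by
    conv_lhs => rw [← hWt, Matrix.transpose_apply]
  rw [h2]

private lemma completion {n s : ℕ} {Rk : Matrix (Fin s) (Fin s) ℝ}
    {M : Matrix (Fin n) (Fin n) ℝ} {Bk : Matrix (Fin n) (Fin s) ℝ}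
    (hMt : Mᵀ = M) (hRt : Rkᵀ = Rk)
    (a : Fin n → ℝ) (y u : Fin s → ℝ)
    (hPy : (Rk + Bkᵀ * M * Bk) *ᵥ y = Bkᵀ *ᵥ (M *ᵥ a)) :
    u ⬝ᵥ (Rk *ᵥ u) + (a + Bk *ᵥ u) ⬝ᵥ (M *ᵥ (a + Bk *ᵥ u))
      = (u + y) ⬝ᵥ ((Rk + Bkᵀ * M * Bk) *ᵥ (u + y))
        + (a ⬝ᵥ (M *ᵥ a) - y ⬝ᵥ ((Rk + Bkᵀ * M * Bk) *ᵥ y)) := by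
  set P := Rk + Bkᵀ * M * Bk with hP
  have hPt : Pᵀ = P := by
    rw [hP, Matrix.transpose_add, hRt, Matrix.transpose_mul, Matrix.transpose_mul,
      Matrix.transpose_transpose, hMt, Matrix.mul_assoc]
  have hPu : ∀ z : Fin s → ℝ, P *ᵥ z = Rk *ᵥ z + Bkᵀ *ᵥ (M *ᵥ (Bk *ᵥ z)) := by
    intro z
    rw [hP, Matrix.add_mulVec, ← Matrix.mulVec_mulVec, ← Matrix.mulVec_mulVec]
  conv_rhs => rw [Matrix.mulVec_add, hPy, dotProduct_add, add_dotProduct, add_dotProduct,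
    dps hPt y u, hPy, hPu u]
  conv_lhs => rw [Matrix.mulVec_add, dotProduct_add, add_dotProduct, add_dotProduct]
  simp only [dotProduct_add, dpt]
  rw [dps hMt (Bk *ᵥ u) a]
  ring

private lemma core {n s : ℕ} {Rk : Matrix (Fin s) (Fin s) ℝ} {M Ak Λk : Matrix (Fin n) (Fin n) ℝ}
    {Bk : Matrix (Fin n) (Fin s) ℝ} {Vk : Matrix (Fin s) (Fin n) ℝ}
    (hRD : Rk.PosDef) (hM : M.PosSemidef)
    (hVk : Vk = (Rk + Bkᵀ * M * Bk)⁻¹ * (Bkᵀ * M * Ak))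
    (hΛk : Λk = Akᵀ * M * Bk * Vk) :
    (Rk + Bkᵀ * M * Bk).PosDef
    ∧ (∀ x : Fin n → ℝ, (Rk + Bkᵀ * M * Bk) *ᵥ (Vk *ᵥ x) = Bkᵀ *ᵥ (M *ᵥ (Ak *ᵥ x)))
    ∧ (∀ v : Fin n → ℝ,
        v ⬝ᵥ (Λk *ᵥ v) = (Vk *ᵥ v) ⬝ᵥ ((Rk + Bkᵀ * M * Bk) *ᵥ (Vk *ᵥ v)))
    ∧ (∀ v : Fin n → ℝ,
        0 ≤ (Ak *ᵥ v) ⬝ᵥ (M *ᵥ (Ak *ᵥ v))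
          - (Vk *ᵥ v) ⬝ᵥ ((Rk + Bkᵀ * M * Bk) *ᵥ (Vk *ᵥ v)))
    ∧ Λkᵀ = Λk := by
  have hMt : Mᵀ = M := herm_t hM.1
  have hRt : Rkᵀ = Rk := herm_t hRD.1
  set P := Rk + Bkᵀ * M * Bk with hP
  have hPD : P.PosDef := by
    refine hRD.add_posSemidef ?_
    have h := hM.conjTranspose_mul_mul_same Bk
    rwa [Matrix.conjTranspose_eq_transpose_of_trivial] at h
  have hPt : Pᵀ = P := by
    rw [hP, Matrix.transpose_add, hRt, Matrix.transpose_mul, Matrix.transpose_mul,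
      Matrix.transpose_transpose, hMt, Matrix.mul_assoc]
  have hPV : P * Vk = Bkᵀ * M * Ak := by
    rw [hVk, ← Matrix.mul_assoc, Matrix.mul_nonsing_inv _ hPD.det_pos.ne'.isUnit, Matrix.one_mul]
  have hPy : ∀ x : Fin n → ℝ, P *ᵥ (Vk *ᵥ x) = Bkᵀ *ᵥ (M *ᵥ (Ak *ᵥ x)) := by
    intro x
    rw [Matrix.mulVec_mulVec, hPV, ← Matrix.mulVec_mulVec, ← Matrix.mulVec_mulVec]
  have hΛq : ∀ v : Fin n → ℝ,
      v ⬝ᵥ (Λk *ᵥ v) = (Vk *ᵥ v) ⬝ᵥ (P *ᵥ (Vk *ᵥ v)) := by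
    intro v
    rw [hΛk, ← Matrix.mulVec_mulVec, ← Matrix.mulVec_mulVec, ← Matrix.mulVec_mulVec,
      dpt, hPy v, dpt, dps hMt]
  have hgap : ∀ v : Fin n → ℝ,
      0 ≤ (Ak *ᵥ v) ⬝ᵥ (M *ᵥ (Ak *ᵥ v)) - (Vk *ᵥ v) ⬝ᵥ (P *ᵥ (Vk *ᵥ v)) := by
    intro v
    have hc := completion hMt hRt (Ak *ᵥ v) (Vk *ᵥ v) (-(Vk *ᵥ v)) (hPy v)
    have h1 := hRD.posSemidef.dotProduct_mulVec_nonneg (-(Vk *ᵥ v))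
    rw [starv] at h1
    have h2 := hM.dotProduct_mulVec_nonneg (Ak *ᵥ v + Bk *ᵥ (-(Vk *ᵥ v)))
    rw [starv] at h2
    rw [neg_add_cancel, zero_dotProduct, zero_add] at hc
    linarith
  have hC : (Bkᵀ * M * Ak)ᵀ = Akᵀ * M * Bk := by
    rw [Matrix.transpose_mul, Matrix.transpose_mul, Matrix.transpose_transpose, hMt,
      ← Matrix.mul_assoc]
  have hΛeq : Λk = (Bkᵀ * M * Ak)ᵀ * (P⁻¹ * (Bkᵀ * M * Ak)) := by
    rw [hΛk, hVk, hC]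
  have hpinvt : (P⁻¹)ᵀ = P⁻¹ := by rw [Matrix.transpose_nonsing_inv, hPt]
  have hΛt : Λkᵀ = Λk := by
    rw [hΛeq, Matrix.transpose_mul, Matrix.transpose_mul, Matrix.transpose_transpose,
      hpinvt, Matrix.mul_assoc]
  exact ⟨hPD, hPy, hΛq, hgap, hΛt⟩

private lemma int_mul_L2 {Ω : Type*} [MeasurableSpace Ω] {μ : Measure Ω} [IsFiniteMeasure μ]
    {f g : Ω → ℝ}
    (hf : MemLp f 2 μ) (hg : MemLp g 2 μ) : Integrable (fun ω => f ω * g ω) μ := by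
  have h : MemLp (f • g) 1 μ := hg.smul hf
  have h2 := h.integrable le_rfl
  exact h2

private lemma integral_quadform {n : ℕ} {Ω : Type*} [MeasurableSpace Ω] (μ : Measure Ω)
    [IsProbabilityMeasure μ] (M Wc : Matrix (Fin n) (Fin n) ℝ) (a : Fin n → ℝ) (c : ℝ)
    (w : Ω → Fin n → ℝ) (hL2 : ∀ i, MemLp (fun ω => w ω i) 2 μ)
    (hmean : ∀ i, ∫ ω, w ω i ∂μ = 0)
    (hcov : ∀ i j, ∫ ω, w ω i * w ω j ∂μ = Wc i j) :
    ∫ ω, ((a + w ω) ⬝ᵥ (M *ᵥ (a + w ω)) + c) ∂μ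
      = a ⬝ᵥ (M *ᵥ a) + (∑ i, ∑ j, M i j * Wc i j) + c := by
  have hmem : ∀ i : Fin n, MemLp (fun ω => a i + w ω i) 2 μ :=
    fun i => (memLp_const (a i)).add (hL2 i)
  have hint : ∀ i j : Fin n,
      Integrable (fun ω => (a i + w ω i) * (M i j * (a j + w ω j))) μ := by
    intro i j
    have h1 : MemLp (fun ω => M i j * (a j + w ω j)) 2 μ := (hmem j).const_mul (M i j)
    exact int_mul_L2 (hmem i) h1
  have hfun : ∀ ω : Ω, (a + w ω) ⬝ᵥ (M *ᵥ (a + w ω)) + c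
      = (∑ i, ∑ j, (a i + w ω i) * (M i j * (a j + w ω j))) + c := by
    intro ω
    simp [dotProduct, Matrix.mulVec, Finset.mul_sum]
  have hIsum : Integrable (fun ω => ∑ i, ∑ j, (a i + w ω i) * (M i j * (a j + w ω j))) μ :=
    integrable_finset_sum _ fun i _ => integrable_finset_sum _ fun j _ => hint i j
  have hone : ∀ i j : Fin n,
      ∫ ω, (a i + w ω i) * (M i j * (a j + w ω j)) ∂μ
        = M i j * (a i * a j) + M i j * Wc i j := by
    intro i j
    have hrw : (fun ω => (a i + w ω i) * (M i j * (a j + w ω j)))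
        = fun ω => (M i j * (a i * a j))
            + ((M i j * a i) * w ω j + ((M i j * a j) * w ω i + M i j * (w ω i * w ω j))) := by
      funext ω; ring
    have hwj : Integrable (fun ω => w ω j) μ := (hL2 j).integrable one_le_two
    have hwi : Integrable (fun ω => w ω i) μ := (hL2 i).integrable one_le_two
    have hij : Integrable (fun ω => w ω i * w ω j) μ := int_mul_L2 (hL2 i) (hL2 j)
    have I1 : Integrable (fun ω => M i j * a i * w ω j) μ := hwj.const_mul _
    have I2 : Integrable (fun ω => M i j * a j * w ω i) μ := hwi.const_mul _
    have I3 : Integrable (fun ω => M i j * (w ω i * w ω j)) μ := hij.const_mul _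
    have I23 : Integrable (fun ω => M i j * a j * w ω i + M i j * (w ω i * w ω j)) μ :=
      I2.add I3
    have I123 : Integrable (fun ω => M i j * a i * w ω j
        + (M i j * a j * w ω i + M i j * (w ω i * w ω j))) μ := I1.add I23
    rw [hrw, integral_add (integrable_const _) I123, integral_add I1 I23, integral_add I2 I3]
    simp only [mul_assoc, integral_const_mul, hmean i, hmean j, hcov i j, integral_const]
    simp
  calc ∫ ω, ((a + w ω) ⬝ᵥ (M *ᵥ (a + w ω)) + c) ∂μ
      = (∫ ω, ∑ i, ∑ j, (a i + w ω i) * (M i j * (a j + w ω j)) ∂μ) + c := by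
        simp only [hfun]
        rw [integral_add hIsum (integrable_const c), integral_const]
        simp
    _ = (∑ i, ∑ j, (M i j * (a i * a j) + M i j * Wc i j)) + c := by
        rw [integral_finset_sum _ fun i _ => integrable_finset_sum _ fun j _ => hint i j]
        congr 1
        refine Finset.sum_congr rfl fun i _ => ?_
        rw [integral_finset_sum _ fun j _ => hint i j]
        exact Finset.sum_congr rfl fun j _ => hone i j
    _ = a ⬝ᵥ (M *ᵥ a) + (∑ i, ∑ j, M i j * Wc i j) + c := by
        have : a ⬝ᵥ (M *ᵥ a) = ∑ i, ∑ j, M i j * (a i * a j) := by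
          simp [dotProduct, Matrix.mulVec, Finset.mul_sum]
          exact Finset.sum_congr rfl fun i _ => Finset.sum_congr rfl fun j _ => by ring
        rw [this, ← Finset.sum_add_distrib]
        simp [Finset.sum_add_distrib]

/-- Verification form of Theorem 1 (fully observed states, perfectly matched fog
controller, symmetric Markov reliability `p = 1 − q`): the quadratic functions
`Jₖ(x,θ) = xᵀ(Lₖ − Λₖ·1{θ=1})x + Σ_{j=k}^{N−1} tr(K_{j+1}Wⱼ)` (with `J_N(x,θ) = xᵀQ_Nx`)
satisfy the finite-horizon Bellman equations: when the controller is ON (`θ = 1`) the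
infimum over controls is attained at the linear feedback `u = −Vₖx`, and when it is OFF
(`θ = 0`) zero control is applied. -/
theorem bellman_verification_full_info {n s : ℕ}
    {Ω : Type*} [MeasurableSpace Ω] (μ : Measure Ω) [IsProbabilityMeasure μ]
    (N : ℕ) (hN : 1 ≤ N) (p : ℝ) (hp : p ∈ Set.Icc (0 : ℝ) 1)
    (Q : ℕ → Matrix (Fin n) (Fin n) ℝ)
    (R : ℕ → Matrix (Fin s) (Fin s) ℝ)
    (A : ℕ → Matrix (Fin n) (Fin n) ℝ)
    (B : ℕ → Matrix (Fin n) (Fin s) ℝ)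
    (W : ℕ → Matrix (Fin n) (Fin n) ℝ)
    (hQ : ∀ k ≤ N, (Q k).PosSemidef)
    (hR : ∀ k < N, (R k).PosDef)
    (hW : ∀ k < N, (W k).PosSemidef)
    (w : ℕ → Ω → Fin n → ℝ)
    (hL2 : ∀ k < N, ∀ i, MemLp (fun ω => w k ω i) 2 μ)
    (hmean : ∀ k < N, ∀ i, ∫ ω, w k ω i ∂μ = 0)
    (hcov : ∀ k < N, ∀ i j, ∫ ω, w k ω i * w k ω j ∂μ = W k i j)
    (K L Λ : ℕ → Matrix (Fin n) (Fin n) ℝ)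
    (V : ℕ → Matrix (Fin s) (Fin n) ℝ)
    (hKN : K N = Q N)
    (hV : ∀ k < N, V k = (R k + (B k)ᵀ * K (k + 1) * B k)⁻¹ * ((B k)ᵀ * K (k + 1) * A k))
    (hΛ : ∀ k < N, Λ k = (A k)ᵀ * K (k + 1) * B k * V k)
    (hL : ∀ k < N, L k = Q k + (A k)ᵀ * K (k + 1) * A k)
    (hK : ∀ k < N, K k = L k - p • Λ k)
    (J : ℕ → (Fin n → ℝ) → Bool → ℝ)
    (hJN : ∀ (x : Fin n → ℝ) (θ : Bool), J N x θ = x ⬝ᵥ (Q N *ᵥ x))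
    (hJ : ∀ k < N, ∀ (x : Fin n → ℝ) (θ : Bool),
      J k x θ = x ⬝ᵥ ((L k - (if θ then (1 : ℝ) else 0) • Λ k) *ᵥ x)
        + ∑ j ∈ Finset.Ico k N, (K (j + 1) * W j).trace) :
    ∀ k < N, ∀ x : Fin n → ℝ,
      letI g : (Fin s → ℝ) → ℝ := fun u =>
        u ⬝ᵥ (R k *ᵥ u)
          + p * ∫ ω, J (k + 1) (A k *ᵥ x + B k *ᵥ u + w k ω) true ∂μ
          + (1 - p) * ∫ ω, J (k + 1) (A k *ᵥ x + B k *ᵥ u + w k ω) false ∂μ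
      (J k x true = x ⬝ᵥ (Q k *ᵥ x) + ⨅ u : Fin s → ℝ, g u)
        ∧ (⨅ u : Fin s → ℝ, g u) = g (-(V k *ᵥ x))
        ∧ J k x false = x ⬝ᵥ (Q k *ᵥ x)
            + p * ∫ ω, J (k + 1) (A k *ᵥ x + w k ω) true ∂μ
            + (1 - p) * ∫ ω, J (k + 1) (A k *ᵥ x + w k ω) false ∂μ := by
  obtain ⟨hp0, hp1⟩ := hp
  -- positive semidefiniteness of all the K j, by downward induction
  have hstep : ∀ j, j < N → (K (j + 1)).PosSemidef → (K j).PosSemidef := by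
    intro j hj hM
    obtain ⟨hPD, hPy, hΛq, hgap, hΛt⟩ := core (hR j hj) hM (hV j hj) (hΛ j hj)
    have hMt : (K (j + 1))ᵀ = K (j + 1) := herm_t hM.1
    refine Matrix.PosSemidef.of_dotProduct_mulVec_nonneg ?_ ?_
    · rw [Matrix.IsHermitian, Matrix.conjTranspose_eq_transpose_of_trivial, hK j hj, hL j hj,
        Matrix.transpose_sub, Matrix.transpose_smul, hΛt, Matrix.transpose_add,
        herm_t (hQ j hj.le).1, Matrix.transpose_mul, Matrix.transpose_mul,
        Matrix.transpose_transpose, hMt, ← Matrix.mul_assoc]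
    · intro v
      rw [starv, hK j hj, hL j hj, quadsub, quadadd, quadsmul, quadAMA, hΛq]
      have h1 := hgap v
      have h2 := hPD.posSemidef.dotProduct_mulVec_nonneg (V j *ᵥ v)
      rw [starv] at h2
      have h3 := (hQ j hj.le).dotProduct_mulVec_nonneg v
      rw [starv] at h3
      nlinarith
  have hPSD : ∀ j, j ≤ N → (K j).PosSemidef := by
    have haux : ∀ m, ∀ j, j ≤ N → N - j ≤ m → (K j).PosSemidef := by
      intro m
      induction m with
      | zero =>
        intro j hj hmj
        have hjN : j = N := by omega
        rw [hjN, hKN]; exact hQ N le_rfl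
      | succ m ih =>
        intro j hj hmj
        rcases eq_or_lt_of_le hj with hje | hlt
        · rw [hje, hKN]; exact hQ N le_rfl
        · exact hstep j hlt (ih (j + 1) hlt (by omega))
    exact fun j hj => haux (N - j) j hj le_rfl
  intro k hk x
  have hk1 : k + 1 ≤ N := hk
  have hMpsd : (K (k + 1)).PosSemidef := hPSD (k + 1) hk1
  obtain ⟨hPD, hPy, hΛq, hgap, hΛt⟩ := core (hR k hk) hMpsd (hV k hk) (hΛ k hk)
  have hMt : (K (k + 1))ᵀ = K (k + 1) := herm_t hMpsd.1
  have hRt : (R k)ᵀ = R k := herm_t (hR k hk).1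
  have hWt : (W k)ᵀ = W k := herm_t (hW k hk).1
  set P : Matrix (Fin s) (Fin s) ℝ := R k + (B k)ᵀ * K (k + 1) * B k with hPdef
  set S : ℝ := ∑ j ∈ Finset.Ico k N, (K (j + 1) * W j).trace with hSdef
  -- the key mixing identity
  have hmix : ∀ a : Fin n → ℝ,
      p * (∫ ω, J (k + 1) (a + w k ω) true ∂μ)
        + (1 - p) * (∫ ω, J (k + 1) (a + w k ω) false ∂μ)
      = a ⬝ᵥ (K (k + 1) *ᵥ a) + S := by
    intro a
    have hsum : S = (K (k + 1) * W k).trace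
        + ∑ j ∈ Finset.Ico (k + 1) N, (K (j + 1) * W j).trace :=
      Finset.sum_eq_sum_Ico_succ_bot hk _
    have htr : (K (k + 1) * W k).trace = ∑ i, ∑ j, K (k + 1) i j * W k i j :=
      trace_sum _ _ hWt
    rcases eq_or_lt_of_le hk1 with hNe | hNl
    · -- k + 1 = N
      have hInt : ∀ θ : Bool, (∫ ω, J (k + 1) (a + w k ω) θ ∂μ)
          = a ⬝ᵥ (K (k + 1) *ᵥ a) + (∑ i, ∑ j, K (k + 1) i j * W k i j) := by
        intro θ
        have hQN : K (k + 1) = Q N := by rw [hNe, hKN]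
        have hJrw : ∀ ω : Ω, J (k + 1) (a + w k ω) θ
            = (a + w k ω) ⬝ᵥ (K (k + 1) *ᵥ (a + w k ω)) + 0 := by
          intro ω
          rw [hQN, hNe, hJN, add_zero]
        simp only [hJrw]
        have := integral_quadform μ (K (k + 1)) (W k) a 0 (w k) (hL2 k hk) (hmean k hk)
          (hcov k hk)
        rw [this, add_zero]
      rw [hInt true, hInt false, hsum, htr]
      have hempty : Finset.Ico (k + 1) N = ∅ := by rw [hNe, Finset.Ico_self]
      rw [hempty]
      simp only [Finset.sum_empty, add_zero]
      ring
    · -- k + 1 < N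
      have hInt : ∀ θ : Bool, (∫ ω, J (k + 1) (a + w k ω) θ ∂μ)
          = a ⬝ᵥ ((L (k + 1) - (if θ then (1 : ℝ) else 0) • Λ (k + 1)) *ᵥ a)
            + (∑ i, ∑ j, (L (k + 1) - (if θ then (1 : ℝ) else 0) • Λ (k + 1)) i j * W k i j)
            + (∑ j ∈ Finset.Ico (k + 1) N, (K (j + 1) * W j).trace) := by
        intro θ
        simp only [hJ (k + 1) hNl]
        exact integral_quadform μ _ (W k) a _ (w k) (hL2 k hk) (hmean k hk) (hcov k hk)
      rw [hInt true, hInt false, hsum, htr]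
      have hKk1 : K (k + 1) = L (k + 1) - p • Λ (k + 1) := hK (k + 1) hNl
      have e1t : (if (true : Bool) then (1 : ℝ) else 0) = 1 := rfl
      have e0t : (if (false : Bool) then (1 : ℝ) else 0) = 0 := rfl
      have eX1 : a ⬝ᵥ ((L (k + 1) - (if (true : Bool) then (1 : ℝ) else 0) • Λ (k + 1)) *ᵥ a)
          = a ⬝ᵥ (L (k + 1) *ᵥ a) - a ⬝ᵥ (Λ (k + 1) *ᵥ a) := by
        rw [e1t, quadsub, quadsmul, one_mul]
      have eX0 : a ⬝ᵥ ((L (k + 1) - (if (false : Bool) then (1 : ℝ) else 0) • Λ (k + 1)) *ᵥ a)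
          = a ⬝ᵥ (L (k + 1) *ᵥ a) := by
        rw [e0t, quadsub, quadsmul]; ring
      have eT1 : ∑ i, ∑ j, (L (k + 1) - (if (true : Bool) then (1 : ℝ) else 0) • Λ (k + 1)) i j * W k i j
          = (∑ i, ∑ j, L (k + 1) i j * W k i j) - ∑ i, ∑ j, Λ (k + 1) i j * W k i j := by
        rw [← Finset.sum_sub_distrib]
        refine Finset.sum_congr rfl fun i _ => ?_
        rw [← Finset.sum_sub_distrib]
        refine Finset.sum_congr rfl fun j _ => ?_
        rw [e1t]
        simp [Matrix.sub_apply, Matrix.smul_apply, smul_eq_mul]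
        ring
      have eT0 : ∑ i, ∑ j, (L (k + 1) - (if (false : Bool) then (1 : ℝ) else 0) • Λ (k + 1)) i j * W k i j
          = ∑ i, ∑ j, L (k + 1) i j * W k i j := by
        refine Finset.sum_congr rfl fun i _ => Finset.sum_congr rfl fun j _ => ?_
        rw [e0t]
        simp [Matrix.sub_apply, Matrix.smul_apply]
      have eK : a ⬝ᵥ (K (k + 1) *ᵥ a)
          = a ⬝ᵥ (L (k + 1) *ᵥ a) - p * (a ⬝ᵥ (Λ (k + 1) *ᵥ a)) := by
        rw [hKk1, quadsub, quadsmul]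
      have eTK : ∑ i, ∑ j, K (k + 1) i j * W k i j
          = (∑ i, ∑ j, L (k + 1) i j * W k i j) - p * ∑ i, ∑ j, Λ (k + 1) i j * W k i j := by
        rw [hKk1, Finset.mul_sum, ← Finset.sum_sub_distrib]
        refine Finset.sum_congr rfl fun i _ => ?_
        rw [Finset.mul_sum, ← Finset.sum_sub_distrib]
        refine Finset.sum_congr rfl fun j _ => ?_
        simp [Matrix.sub_apply, Matrix.smul_apply, smul_eq_mul]
        ring
      rw [eX1, eX0, eT1, eT0, eK, eTK]
      ring
  -- facts about g
  have quadM : ∀ v : Fin n → ℝ,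
      v ⬝ᵥ (((A k)ᵀ * K (k + 1) * A k) *ᵥ v) = (A k *ᵥ v) ⬝ᵥ (K (k + 1) *ᵥ (A k *ᵥ v)) :=
    quadAMA _ _
  set y : Fin s → ℝ := V k *ᵥ x with hydef
  set c₀ : ℝ := (A k *ᵥ x) ⬝ᵥ (K (k + 1) *ᵥ (A k *ᵥ x)) - y ⬝ᵥ (P *ᵥ y) + S with hc₀def
  dsimp only
  set g : (Fin s → ℝ) → ℝ := fun u =>
    u ⬝ᵥ (R k *ᵥ u)
      + p * ∫ ω, J (k + 1) (A k *ᵥ x + B k *ᵥ u + w k ω) true ∂μ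
      + (1 - p) * ∫ ω, J (k + 1) (A k *ᵥ x + B k *ᵥ u + w k ω) false ∂μ with hgdef
  have hg : ∀ u : Fin s → ℝ, g u = (u + y) ⬝ᵥ (P *ᵥ (u + y)) + c₀ := by
    intro u
    have e1 : g u = u ⬝ᵥ (R k *ᵥ u)
        + ((A k *ᵥ x + B k *ᵥ u) ⬝ᵥ (K (k + 1) *ᵥ (A k *ᵥ x + B k *ᵥ u)) + S) := by
      rw [hgdef]
      dsimp only
      rw [add_assoc, hmix (A k *ᵥ x + B k *ᵥ u)]
    rw [e1, ← add_assoc, completion hMt hRt (A k *ᵥ x) y u (hPy x), hc₀def]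
    ring
  have hgnn : ∀ u : Fin s → ℝ, c₀ ≤ g u := by
    intro u
    rw [hg u]
    have h2 := hPD.posSemidef.dotProduct_mulVec_nonneg (u + y)
    rw [starv] at h2
    linarith
  have hgmin : g (-y) = c₀ := by
    rw [hg (-y), neg_add_cancel, zero_dotProduct, zero_add]
  have hbdd : BddBelow (Set.range g) := by
    refine ⟨c₀, ?_⟩
    rintro r ⟨u, rfl⟩
    exact hgnn u
  have hinf : (⨅ u : Fin s → ℝ, g u) = g (-y) := by
    refine le_antisymm (ciInf_le hbdd _) (le_ciInf fun u => ?_)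
    rw [hgmin]
    exact hgnn u
  refine ⟨?_, hinf, ?_⟩
  · -- ON part
    have hΛq' : x ⬝ᵥ (Λ k *ᵥ x) = y ⬝ᵥ (P *ᵥ y) := hΛq x
    have e1t : (if (true : Bool) then (1 : ℝ) else 0) = 1 := rfl
    rw [hJ k hk x true, hinf, hgmin, hc₀def, hL k hk, e1t, one_smul, quadsub,
      quadadd, quadM x, hΛq']
    ring
  · -- OFF part
    have e0t : (if (false : Bool) then (1 : ℝ) else 0) = 0 := rfl
    rw [hJ k hk x false, add_assoc, hmix (A k *ᵥ x), hL k hk, e0t, zero_smul, sub_zero,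
      quadadd, quadM x]
    ring
end

section
/- Let N ≥ 1, and for k = 0,…,N let Qₖ be n×n real symmetric positive semidefinite matrices; for k = 0,…,N−1 let Rₖ be s×s real symmetric positive definite matrices, Aₖ n×n real matrices, Bₖ n×s real matrices, and Wₖ n×n real symmetric positive semidefinite matrices. For p ∈ [0,1] define recursively K_N(p) = Q_N and Kₖ(p) = Qₖ + AₖᵀK_{k+1}(p)Aₖ − p·AₖᵀK_{k+1}(p)Bₖ(Rₖ + BₖᵀK_{k+1}(p)Bₖ)⁻¹BₖᵀK_{k+1}(p)Aₖ. Then for all 0 ≤ p ≤ p' ≤ 1 and every k ∈ {0,…,N}, the matrix Kₖ(p) − Kₖ(p') is positive semidefinite; consequently, for every x₀ ∈ ℝⁿ, x₀ᵀK₀(p')x₀ + Σ_{k=0}^{N−1} tr(K_{k+1}(p')Wₖ) ≤ x₀ᵀK₀(p)x₀ + Σ_{k=0}^{N−1} tr(K_{k+1}(p)Wₖ). -/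
open Matrix

section RiccatiAux

variable {n s : ℕ}

private lemma smul_psd {M : Matrix (Fin n) (Fin n) ℝ} (hM : M.PosSemidef) {c : ℝ} (hc : 0 ≤ c) :
    (c • M).PosSemidef := by
  refine ⟨?_, fun x => ?_⟩
  · unfold Matrix.IsHermitian
    rw [conjTranspose_smul, hM.1]; simp
  · exact (hM.smul hc).2 x

private lemma conj_psd {m : ℕ} {M : Matrix (Fin n) (Fin n) ℝ} (hM : M.PosSemidef)
    (A : Matrix (Fin n) (Fin m) ℝ) : (Aᵀ * M * A).PosSemidef := by
  rw [← conjTranspose_eq_transpose_of_trivial]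
  exact hM.conjTranspose_mul_mul_same A

private lemma symm_T {M : Matrix (Fin n) (Fin n) ℝ} (hM : M.IsHermitian) : Mᵀ = M :=
  (conjTranspose_eq_transpose_of_trivial M) ▸ hM

private lemma expand_quad (A M : Matrix (Fin n) (Fin n) ℝ) (B : Matrix (Fin n) (Fin s) ℝ)
    (R : Matrix (Fin s) (Fin s) ℝ) (L : Matrix (Fin s) (Fin n) ℝ) (hMT : Mᵀ = M) :
    (A + B*L)ᵀ*M*(A+B*L) + Lᵀ*R*L
      = Aᵀ*M*A + (Bᵀ*M*A)ᵀ*L + Lᵀ*(Bᵀ*M*A) + Lᵀ*(R+Bᵀ*M*B)*L := by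
  simp only [transpose_add, transpose_mul, transpose_transpose, hMT,
    Matrix.add_mul, Matrix.mul_add, Matrix.mul_assoc]
  abel

private lemma sq_terms (S G : Matrix (Fin s) (Fin s) ℝ) (C : Matrix (Fin s) (Fin n) ℝ)
    (hSG : S * G = 1) (hGS : G * S = 1) (hGT : Gᵀ = G) (hST : Sᵀ = S) :
    (Cᵀ*(-(G*C)) = -(Cᵀ*G*C) - (-(G*C))ᵀ*C - (-(G*C))ᵀ*S*(-(G*C))) ∧
    (∀ L₁ : Matrix (Fin s) (Fin n) ℝ,
      (L₁ - (-(G*C)))ᵀ*S*(L₁ - (-(G*C)))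
        = L₁ᵀ*S*L₁ + Cᵀ*L₁ + L₁ᵀ*C + Cᵀ*G*C) := by
  have hc1 : ∀ X : Matrix (Fin s) (Fin n) ℝ, S * (G * X) = X := fun X => by
    rw [← Matrix.mul_assoc, hSG, Matrix.one_mul]
  have hc2 : ∀ X : Matrix (Fin s) (Fin n) ℝ, G * (S * X) = X := fun X => by
    rw [← Matrix.mul_assoc, hGS, Matrix.one_mul]
  constructor
  · simp only [transpose_neg, transpose_mul, hGT, hST, Matrix.neg_mul, Matrix.mul_neg,
      Matrix.mul_assoc, hc1, hc2]
    abel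
  · intro L₁
    simp only [transpose_sub, transpose_neg, transpose_mul, hGT, hST,
      Matrix.sub_mul, Matrix.mul_sub, Matrix.neg_mul, Matrix.mul_neg,
      Matrix.mul_assoc, hc1, hc2]
    abel

private lemma S_facts (A : Matrix (Fin n) (Fin n) ℝ) (B : Matrix (Fin n) (Fin s) ℝ)
    (R : Matrix (Fin s) (Fin s) ℝ) (hR : R.PosDef)
    {M : Matrix (Fin n) (Fin n) ℝ} (hM : M.PosSemidef) :
    (R + Bᵀ*M*B).PosDef ∧
    ((R + Bᵀ*M*B) * (R + Bᵀ*M*B)⁻¹ = 1) ∧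
    ((R + Bᵀ*M*B)⁻¹ * (R + Bᵀ*M*B) = 1) ∧
    (((R + Bᵀ*M*B)⁻¹)ᵀ = (R + Bᵀ*M*B)⁻¹) ∧
    ((R + Bᵀ*M*B)ᵀ = R + Bᵀ*M*B) ∧
    ((Bᵀ*M*A)ᵀ = Aᵀ*M*B) := by
  have hS : (R + Bᵀ*M*B).PosDef := hR.add_posSemidef (conj_psd hM B)
  have hdet : IsUnit (R + Bᵀ*M*B).det := isUnit_iff_ne_zero.mpr hS.det_pos.ne'
  have hST : (R + Bᵀ*M*B)ᵀ = R + Bᵀ*M*B := symm_T hS.isHermitian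
  refine ⟨hS, Matrix.mul_nonsing_inv _ hdet, Matrix.nonsing_inv_mul _ hdet, ?_, hST, ?_⟩
  · rw [Matrix.transpose_nonsing_inv, hST]
  · rw [transpose_mul, transpose_mul, transpose_transpose, symm_T hM.isHermitian,
      Matrix.mul_assoc]

/-- Gain (completed-square) form of the Riccati map. -/
private lemma gain_form (Q A : Matrix (Fin n) (Fin n) ℝ) (B : Matrix (Fin n) (Fin s) ℝ)
    (R : Matrix (Fin s) (Fin s) ℝ) (hR : R.PosDef)
    {M : Matrix (Fin n) (Fin n) ℝ} (hM : M.PosSemidef) (q : ℝ) :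
    Q + Aᵀ*M*A - q • (Aᵀ*M*B*(R + Bᵀ*M*B)⁻¹*(Bᵀ*M*A))
      = Q + (1-q) • (Aᵀ*M*A)
        + q • ((A + B*(-((R + Bᵀ*M*B)⁻¹*(Bᵀ*M*A))))ᵀ*M*(A + B*(-((R + Bᵀ*M*B)⁻¹*(Bᵀ*M*A))))
            + (-((R + Bᵀ*M*B)⁻¹*(Bᵀ*M*A)))ᵀ*R*(-((R + Bᵀ*M*B)⁻¹*(Bᵀ*M*A)))) := by
  obtain ⟨hS, hSG, hGS, hGT, hST, hCT⟩ := S_facts A B R hR hM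
  rw [show Aᵀ*M*B*(R + Bᵀ*M*B)⁻¹*(Bᵀ*M*A)
      = (Bᵀ*M*A)ᵀ*(R + Bᵀ*M*B)⁻¹*(Bᵀ*M*A) from by rw [hCT],
    expand_quad A M B R _ (symm_T hM.isHermitian), (sq_terms _ _ _ hSG hGS hGT hST).1]
  module

/-- The key monotonicity identity for the completed-square forms. -/
private lemma mono_identity (A : Matrix (Fin n) (Fin n) ℝ) (B : Matrix (Fin n) (Fin s) ℝ)
    (R : Matrix (Fin s) (Fin s) ℝ) (hR : R.PosDef)
    {M M' : Matrix (Fin n) (Fin n) ℝ} (hM : M.PosSemidef) (hM' : M'.PosSemidef) :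
    ((A + B*(-((R + Bᵀ*M*B)⁻¹*(Bᵀ*M*A))))ᵀ*M*(A + B*(-((R + Bᵀ*M*B)⁻¹*(Bᵀ*M*A))))
        + (-((R + Bᵀ*M*B)⁻¹*(Bᵀ*M*A)))ᵀ*R*(-((R + Bᵀ*M*B)⁻¹*(Bᵀ*M*A))))
      - ((A + B*(-((R + Bᵀ*M'*B)⁻¹*(Bᵀ*M'*A))))ᵀ*M'*(A + B*(-((R + Bᵀ*M'*B)⁻¹*(Bᵀ*M'*A))))
        + (-((R + Bᵀ*M'*B)⁻¹*(Bᵀ*M'*A)))ᵀ*R*(-((R + Bᵀ*M'*B)⁻¹*(Bᵀ*M'*A))))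
      = (A + B*(-((R + Bᵀ*M*B)⁻¹*(Bᵀ*M*A))))ᵀ*(M-M')*(A + B*(-((R + Bᵀ*M*B)⁻¹*(Bᵀ*M*A))))
        + ((-((R + Bᵀ*M*B)⁻¹*(Bᵀ*M*A))) - (-((R + Bᵀ*M'*B)⁻¹*(Bᵀ*M'*A))))ᵀ
            *(R + Bᵀ*M'*B)
            *((-((R + Bᵀ*M*B)⁻¹*(Bᵀ*M*A))) - (-((R + Bᵀ*M'*B)⁻¹*(Bᵀ*M'*A)))) := by
  obtain ⟨hS', hSG', hGS', hGT', hST', hCT'⟩ := S_facts A B R hR hM'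
  set L : Matrix (Fin s) (Fin n) ℝ := -((R + Bᵀ*M*B)⁻¹*(Bᵀ*M*A)) with hL
  -- first summand of RHS
  have h3 : (A + B*L)ᵀ*(M-M')*(A + B*L)
      = (A + B*L)ᵀ*M*(A + B*L) - (A + B*L)ᵀ*M'*(A + B*L) := by
    simp only [Matrix.mul_sub, Matrix.sub_mul]
  -- second summand of RHS, via completed squares
  have h2 := (sq_terms (R + Bᵀ*M'*B) (R + Bᵀ*M'*B)⁻¹ (Bᵀ*M'*A) hSG' hGS' hGT' hST').2 L
  have h1 := (sq_terms (R + Bᵀ*M'*B) (R + Bᵀ*M'*B)⁻¹ (Bᵀ*M'*A) hSG' hGS' hGT' hST').1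
  have e1 : (A + B*L)ᵀ*M'*(A + B*L)
      = Aᵀ*M'*A + (Bᵀ*M'*A)ᵀ*L + Lᵀ*(Bᵀ*M'*A) + Lᵀ*(R+Bᵀ*M'*B)*L - Lᵀ*R*L := by
    rw [eq_sub_iff_add_eq]
    exact expand_quad A M' B R L (symm_T hM'.isHermitian)
  have e2 : (A + B*(-((R + Bᵀ*M'*B)⁻¹*(Bᵀ*M'*A))))ᵀ*M'*(A + B*(-((R + Bᵀ*M'*B)⁻¹*(Bᵀ*M'*A))))
      = Aᵀ*M'*A + (Bᵀ*M'*A)ᵀ*(-((R + Bᵀ*M'*B)⁻¹*(Bᵀ*M'*A)))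
        + (-((R + Bᵀ*M'*B)⁻¹*(Bᵀ*M'*A)))ᵀ*(Bᵀ*M'*A)
        + (-((R + Bᵀ*M'*B)⁻¹*(Bᵀ*M'*A)))ᵀ*(R+Bᵀ*M'*B)*(-((R + Bᵀ*M'*B)⁻¹*(Bᵀ*M'*A)))
        - (-((R + Bᵀ*M'*B)⁻¹*(Bᵀ*M'*A)))ᵀ*R*(-((R + Bᵀ*M'*B)⁻¹*(Bᵀ*M'*A))) := by
    rw [eq_sub_iff_add_eq]
    exact expand_quad A M' B R _ (symm_T hM'.isHermitian)
  rw [h3, h2, e1, e2, h1]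
  abel
private lemma trace_psd_nonneg {M : Matrix (Fin n) (Fin n) ℝ} (hM : M.PosSemidef) :
    0 ≤ M.trace := by
  rw [Matrix.trace]
  refine Finset.sum_nonneg fun i _ => ?_
  have := hM.dotProduct_mulVec_nonneg (Pi.single i 1)
  simpa [Matrix.mulVec, dotProduct, Pi.single_apply, Matrix.diag] using this

private lemma trace_mul_psd_nonneg {X Y : Matrix (Fin n) (Fin n) ℝ}
    (hX : X.PosSemidef) (hY : Y.PosSemidef) : 0 ≤ (X * Y).trace := by
  obtain ⟨C, rfl⟩ : ∃ C : Matrix (Fin n) (Fin n) ℝ, X = Cᴴ * C := by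
    open scoped MatrixOrder in
    obtain ⟨C, hC⟩ := CStarAlgebra.nonneg_iff_eq_star_mul_self.mp hX.nonneg
    exact ⟨C, hC⟩
  rw [show (Cᴴ * C * Y).trace = (C * Y * Cᴴ).trace from (Matrix.trace_mul_cycle C Y Cᴴ).symm]
  exact trace_psd_nonneg (hY.mul_mul_conjTranspose_same C)

private lemma step_all (Q A : Matrix (Fin n) (Fin n) ℝ) (B : Matrix (Fin n) (Fin s) ℝ)
    (R : Matrix (Fin s) (Fin s) ℝ) (hQ : Q.PosSemidef) (hR : R.PosDef)
    {M M' : Matrix (Fin n) (Fin n) ℝ} (hM : M.PosSemidef) (hM' : M'.PosSemidef)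
    (hMM' : (M - M').PosSemidef) {p p' : ℝ} (hp0 : 0 ≤ p) (hpp' : p ≤ p') (hp'1 : p' ≤ 1) :
    (Q + Aᵀ*M*A - p • (Aᵀ*M*B*(R + Bᵀ*M*B)⁻¹*(Bᵀ*M*A))).PosSemidef ∧
    (Q + Aᵀ*M'*A - p' • (Aᵀ*M'*B*(R + Bᵀ*M'*B)⁻¹*(Bᵀ*M'*A))).PosSemidef ∧
    ((Q + Aᵀ*M*A - p • (Aᵀ*M*B*(R + Bᵀ*M*B)⁻¹*(Bᵀ*M*A)))
      - (Q + Aᵀ*M'*A - p' • (Aᵀ*M'*B*(R + Bᵀ*M'*B)⁻¹*(Bᵀ*M'*A)))).PosSemidef := by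
  have hp1 : p ≤ 1 := hpp'.trans hp'1
  have hp'0 : 0 ≤ p' := hp0.trans hpp'
  obtain ⟨hS', hSG', hGS', hGT', hST', hCT'⟩ := S_facts A B R hR hM'
  have g1 := gain_form Q A B R hR hM p
  have g2 := gain_form Q A B R hR hM' p'
  have h1' := (sq_terms (R + Bᵀ*M'*B) (R + Bᵀ*M'*B)⁻¹ (Bᵀ*M'*A) hSG' hGS' hGT' hST').1
  -- PSD of the completed-square (gain) quadratics
  have psdGM : ((A + B*(-((R + Bᵀ*M*B)⁻¹*(Bᵀ*M*A))))ᵀ*M*(A + B*(-((R + Bᵀ*M*B)⁻¹*(Bᵀ*M*A))))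
      + (-((R + Bᵀ*M*B)⁻¹*(Bᵀ*M*A)))ᵀ*R*(-((R + Bᵀ*M*B)⁻¹*(Bᵀ*M*A)))).PosSemidef :=
    (conj_psd hM _).add (conj_psd hR.posSemidef _)
  have psdGM' : ((A + B*(-((R + Bᵀ*M'*B)⁻¹*(Bᵀ*M'*A))))ᵀ*M'*(A + B*(-((R + Bᵀ*M'*B)⁻¹*(Bᵀ*M'*A))))
      + (-((R + Bᵀ*M'*B)⁻¹*(Bᵀ*M'*A)))ᵀ*R*(-((R + Bᵀ*M'*B)⁻¹*(Bᵀ*M'*A)))).PosSemidef :=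
    (conj_psd hM' _).add (conj_psd hR.posSemidef _)
  refine ⟨?_, ?_, ?_⟩
  · rw [g1]
    exact (hQ.add (smul_psd (conj_psd hM A) (by linarith))).add (smul_psd psdGM hp0)
  · rw [g2]
    exact (hQ.add (smul_psd (conj_psd hM' A) (by linarith))).add (smul_psd psdGM' hp'0)
  · have key' : (Bᵀ*M'*A)ᵀ*(R + Bᵀ*M'*B)⁻¹*(Bᵀ*M'*A)
        = Aᵀ*M'*A
          - ((A + B*(-((R + Bᵀ*M'*B)⁻¹*(Bᵀ*M'*A))))ᵀ*M'*(A + B*(-((R + Bᵀ*M'*B)⁻¹*(Bᵀ*M'*A))))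
            + (-((R + Bᵀ*M'*B)⁻¹*(Bᵀ*M'*A)))ᵀ*R*(-((R + Bᵀ*M'*B)⁻¹*(Bᵀ*M'*A)))) := by
      rw [expand_quad A M' B R (-((R + Bᵀ*M'*B)⁻¹*(Bᵀ*M'*A))) (symm_T hM'.isHermitian), h1']
      abel
    have hsub : Aᵀ*(M-M')*A = Aᵀ*M*A - Aᵀ*M'*A := by
      simp only [Matrix.mul_sub, Matrix.sub_mul]
    have hid : (Q + Aᵀ*M*A - p • (Aᵀ*M*B*(R + Bᵀ*M*B)⁻¹*(Bᵀ*M*A)))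
        - (Q + Aᵀ*M'*A - p' • (Aᵀ*M'*B*(R + Bᵀ*M'*B)⁻¹*(Bᵀ*M'*A)))
        = (1-p) • (Aᵀ*(M-M')*A)
          + p • ((A + B*(-((R + Bᵀ*M*B)⁻¹*(Bᵀ*M*A))))ᵀ*(M-M')*(A + B*(-((R + Bᵀ*M*B)⁻¹*(Bᵀ*M*A))))
              + ((-((R + Bᵀ*M*B)⁻¹*(Bᵀ*M*A))) - (-((R + Bᵀ*M'*B)⁻¹*(Bᵀ*M'*A))))ᵀ
                  *(R + Bᵀ*M'*B)
                  *((-((R + Bᵀ*M*B)⁻¹*(Bᵀ*M*A))) - (-((R + Bᵀ*M'*B)⁻¹*(Bᵀ*M'*A)))))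
          + (p'-p) • ((Bᵀ*M'*A)ᵀ*(R + Bᵀ*M'*B)⁻¹*(Bᵀ*M'*A)) := by
      rw [g1, g2, ← mono_identity A B R hR hM hM', hsub, key']
      module
    rw [hid]
    refine ((smul_psd (conj_psd hMM' A) (by linarith)).add
      (smul_psd ((conj_psd hMM' _).add (conj_psd hS'.posSemidef _)) hp0)).add
      (smul_psd (conj_psd hS'.inv.posSemidef _) (by linarith))

end RiccatiAux

/-- Monotonicity of the minimum cost in the controller reliability `p`: with the
Riccati recursion `K_N(p) = Q_N`,
`K_k(p) = Qₖ + AₖᵀK_{k+1}(p)Aₖ − p·AₖᵀK_{k+1}(p)Bₖ(Rₖ + BₖᵀK_{k+1}(p)Bₖ)⁻¹BₖᵀK_{k+1}(p)Aₖ`,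
for `0 ≤ p ≤ p' ≤ 1` all the matrices `K_k(p) − K_k(p')` are positive semidefinite, and
hence `x₀ᵀK₀(p')x₀ + Σ tr(K_{k+1}(p')Wₖ) ≤ x₀ᵀK₀(p)x₀ + Σ tr(K_{k+1}(p)Wₖ)`. -/
theorem riccati_cost_antitone_in_reliability {n s : ℕ} (N : ℕ) (hN : 1 ≤ N)
    (Q : ℕ → Matrix (Fin n) (Fin n) ℝ)
    (R : ℕ → Matrix (Fin s) (Fin s) ℝ)
    (A : ℕ → Matrix (Fin n) (Fin n) ℝ)
    (B : ℕ → Matrix (Fin n) (Fin s) ℝ)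
    (W : ℕ → Matrix (Fin n) (Fin n) ℝ)
    (hQ : ∀ k ≤ N, (Q k).PosSemidef)
    (hR : ∀ k < N, (R k).PosDef)
    (hW : ∀ k < N, (W k).PosSemidef)
    (K : ℝ → ℕ → Matrix (Fin n) (Fin n) ℝ)
    (hKN : ∀ p ∈ Set.Icc (0 : ℝ) 1, K p N = Q N)
    (hKrec : ∀ p ∈ Set.Icc (0 : ℝ) 1, ∀ k < N,
      K p k = Q k + (A k)ᵀ * K p (k + 1) * A k
        - p • ((A k)ᵀ * K p (k + 1) * B k
            * (R k + (B k)ᵀ * K p (k + 1) * B k)⁻¹ * ((B k)ᵀ * K p (k + 1) * A k))) :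
    ∀ p p' : ℝ, 0 ≤ p → p ≤ p' → p' ≤ 1 →
      (∀ k ≤ N, (K p k - K p' k).PosSemidef) ∧
      (∀ x₀ : Fin n → ℝ,
        x₀ ⬝ᵥ (K p' 0 *ᵥ x₀) + ∑ k ∈ Finset.range N, (K p' (k + 1) * W k).trace
          ≤ x₀ ⬝ᵥ (K p 0 *ᵥ x₀) + ∑ k ∈ Finset.range N, (K p (k + 1) * W k).trace) := by
  intro p p' hp0 hpp' hp'1
  have hp : p ∈ Set.Icc (0:ℝ) 1 := ⟨hp0, hpp'.trans hp'1⟩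
  have hp' : p' ∈ Set.Icc (0:ℝ) 1 := ⟨hp0.trans hpp', hp'1⟩
  have key : ∀ d k, k + d = N →
      (K p k).PosSemidef ∧ (K p' k).PosSemidef ∧ (K p k - K p' k).PosSemidef := by
    intro d
    induction d with
    | zero =>
      intro k hk
      simp only [Nat.add_zero] at hk
      subst hk
      rw [hKN p hp, hKN p' hp']
      refine ⟨hQ _ le_rfl, hQ _ le_rfl, ?_⟩
      rw [sub_self]
      exact Matrix.PosSemidef.zero
    | succ d ih =>
      intro k hk
      have hkN : k < N := by omega
      obtain ⟨h1, h2, h3⟩ := ih (k+1) (by omega)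
      rw [hKrec p hp k hkN, hKrec p' hp' k hkN]
      exact step_all (Q k) (A k) (B k) (R k) (hQ k hkN.le) (hR k hkN) h1 h2 h3 hp0 hpp' hp'1
  have part1 : ∀ k ≤ N,
      (K p k).PosSemidef ∧ (K p' k).PosSemidef ∧ (K p k - K p' k).PosSemidef :=
    fun k hk => key (N - k) k (by omega)
  refine ⟨fun k hk => (part1 k hk).2.2, fun x₀ => ?_⟩
  have hx : x₀ ⬝ᵥ (K p' 0 *ᵥ x₀) ≤ x₀ ⬝ᵥ (K p 0 *ᵥ x₀) := by
    have h := (part1 0 (by omega)).2.2.dotProduct_mulVec_nonneg x₀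
    rw [star_trivial, Matrix.sub_mulVec, dotProduct_sub] at h
    linarith
  have hsum : ∀ k ∈ Finset.range N, (K p' (k+1) * W k).trace ≤ (K p (k+1) * W k).trace := by
    intro k hk
    rw [Finset.mem_range] at hk
    have hD := (part1 (k+1) (by omega)).2.2
    have ht := trace_mul_psd_nonneg hD (hW k hk)
    rw [Matrix.sub_mul, Matrix.trace_sub] at ht
    linarith
  have hs := Finset.sum_le_sum hsum
  linarith
end

section
/- Let (Ω, 𝓕, ℙ) be a probability space, 𝓖 ⊆ 𝓕 a sub-σ-algebra, X : Ω → ℝⁿ a random vector with square-integrable components, X̂ = E[X | 𝓖], ε = X − X̂. Let R be an s×s real symmetric positive definite matrix, K an n×n real symmetric positive semidefinite matrix, A an n×n real matrix, B an n×s real matrix, V = (R + BᵀKB)⁻¹BᵀKA, Λ = AᵀKB(R + BᵀKB)⁻¹BᵀKA. Let w : Ω → ℝⁿ be a zero-mean random vector with covariance matrix W, independent of the σ-algebra generated by X and 𝓖. Then over all 𝓖-measurable square-integrable U : Ω → ℝˢ, the functional U ↦ E[UᵀRU + (AX + BU + w)ᵀK(AX + BU + w)] attains its minimum at U = −VX̂,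 with minimum value E[Xᵀ(AᵀKA − Λ)X] + E[εᵀΛε] + tr(KW). -/
open Matrix MeasureTheory ProbabilityTheory

section Helpers

lemma dp_flip {m k : ℕ} (M : Matrix (Fin m) (Fin k) ℝ) (a : Fin m → ℝ) (b : Fin k → ℝ) :
    (M *ᵥ b) ⬝ᵥ a = b ⬝ᵥ (Mᵀ *ᵥ a) := by
  rw [Matrix.dotProduct_mulVec, Matrix.vecMul_transpose]

lemma dp_swap {m k : ℕ} (M : Matrix (Fin m) (Fin k) ℝ) (a : Fin m → ℝ) (b : Fin k → ℝ) :
    a ⬝ᵥ (M *ᵥ b) = b ⬝ᵥ (Mᵀ *ᵥ a) := by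
  rw [dotProduct_comm, dp_flip]

lemma quad_split {m k : ℕ} (S : Matrix (Fin m) (Fin m) ℝ) (V C : Matrix (Fin m) (Fin k) ℝ)
    (L : Matrix (Fin k) (Fin k) ℝ)
    (hSt : Sᵀ = S) (hSV : S * V = C) (hL : Vᵀ * C = L)
    (a : Fin m → ℝ) (b : Fin k → ℝ) :
    (a + V *ᵥ b) ⬝ᵥ (S *ᵥ (a + V *ᵥ b))
      = a ⬝ᵥ (S *ᵥ a) + 2 * (a ⬝ᵥ (C *ᵥ b)) + b ⬝ᵥ (L *ᵥ b) := by
  have h1 : a ⬝ᵥ (S *ᵥ (V *ᵥ b)) = a ⬝ᵥ (C *ᵥ b) := by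
    rw [Matrix.mulVec_mulVec, hSV]
  have h2 : (V *ᵥ b) ⬝ᵥ (S *ᵥ a) = a ⬝ᵥ (C *ᵥ b) := by
    rw [dp_flip, Matrix.mulVec_mulVec, dp_swap, Matrix.transpose_mul,
      Matrix.transpose_transpose, hSt, hSV]
  have h3 : (V *ᵥ b) ⬝ᵥ (S *ᵥ (V *ᵥ b)) = b ⬝ᵥ (L *ᵥ b) := by
    rw [dp_flip, Matrix.mulVec_mulVec, Matrix.mulVec_mulVec, Matrix.mul_assoc, hSV, hL]
  rw [Matrix.mulVec_add, dotProduct_add, add_dotProduct,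
    add_dotProduct, h1, h2, h3]
  ring

lemma key_alg {n s : ℕ} (R S : Matrix (Fin s) (Fin s) ℝ) (K A L : Matrix (Fin n) (Fin n) ℝ)
    (B : Matrix (Fin n) (Fin s) ℝ) (V C : Matrix (Fin s) (Fin n) ℝ)
    (hRt : Rᵀ = R) (hKt : Kᵀ = K)
    (hSdef : S = R + Bᵀ * (K * B)) (hCdef : C = Bᵀ * (K * A)) (hSt : Sᵀ = S)
    (hSV : S * V = C) (hL : Vᵀ * C = L)
    (u : Fin s → ℝ) (x xh z : Fin n → ℝ) :
    u ⬝ᵥ (R *ᵥ u) + (A *ᵥ x + B *ᵥ u + z) ⬝ᵥ (K *ᵥ (A *ᵥ x + B *ᵥ u + z))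
    = (u + V *ᵥ xh) ⬝ᵥ (S *ᵥ (u + V *ᵥ xh))
      + 2 * ((u + V *ᵥ xh) ⬝ᵥ (C *ᵥ (x - xh)))
      + (x - xh) ⬝ᵥ (L *ᵥ (x - xh))
      + x ⬝ᵥ ((Aᵀ * (K * A) - L) *ᵥ x)
      + 2 * ((A *ᵥ x + B *ᵥ u) ⬝ᵥ (K *ᵥ z))
      + z ⬝ᵥ (K *ᵥ z) := by
  have hz : (A *ᵥ x + B *ᵥ u + z) ⬝ᵥ (K *ᵥ (A *ᵥ x + B *ᵥ u + z))
      = (A *ᵥ x + B *ᵥ u) ⬝ᵥ (K *ᵥ (A *ᵥ x + B *ᵥ u))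
        + 2 * ((A *ᵥ x + B *ᵥ u) ⬝ᵥ (K *ᵥ z)) + z ⬝ᵥ (K *ᵥ z) := by
    simp only [Matrix.mulVec_add, dotProduct_add, add_dotProduct]
    rw [dp_swap K z (A *ᵥ x), dp_swap K z (B *ᵥ u), hKt]
    ring
  have hq : (A *ᵥ x + B *ᵥ u) ⬝ᵥ (K *ᵥ (A *ᵥ x + B *ᵥ u)) + u ⬝ᵥ (R *ᵥ u)
      = u ⬝ᵥ (S *ᵥ u) + 2 * (u ⬝ᵥ (C *ᵥ x)) + x ⬝ᵥ ((Aᵀ * (K * A)) *ᵥ x) := by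
    simp only [Matrix.mulVec_add, dotProduct_add, add_dotProduct]
    rw [dp_flip A (K *ᵥ (A *ᵥ x)) x, dp_flip A (K *ᵥ (B *ᵥ u)) x,
      dp_flip B (K *ᵥ (A *ᵥ x)) u, dp_flip B (K *ᵥ (B *ᵥ u)) u]
    simp only [Matrix.mulVec_mulVec, Matrix.mul_assoc]
    rw [dp_swap (Aᵀ * (K * B)) x u]
    simp only [Matrix.transpose_mul, Matrix.transpose_transpose, hKt, Matrix.mul_assoc]
    rw [hSdef, Matrix.add_mulVec, dotProduct_add, hCdef]
    ring
  have hq2 : (u + V *ᵥ x) ⬝ᵥ (S *ᵥ (u + V *ᵥ x))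
      = u ⬝ᵥ (S *ᵥ u) + 2 * (u ⬝ᵥ (C *ᵥ x)) + x ⬝ᵥ ((Vᵀ * C) *ᵥ x) :=
    quad_split S V C (Vᵀ * C) hSt hSV rfl u x
  have hx : u + V *ᵥ x = (u + V *ᵥ xh) + V *ᵥ (x - xh) := by
    rw [Matrix.mulVec_sub]; abel
  have hq3 : (u + V *ᵥ x) ⬝ᵥ (S *ᵥ (u + V *ᵥ x))
      = (u + V *ᵥ xh) ⬝ᵥ (S *ᵥ (u + V *ᵥ xh)) + 2 * ((u + V *ᵥ xh) ⬝ᵥ (C *ᵥ (x - xh)))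
        + (x - xh) ⬝ᵥ ((Vᵀ * C) *ᵥ (x - xh)) := by
    rw [hx]; exact quad_split S V C (Vᵀ * C) hSt hSV rfl _ _
  have hsub : x ⬝ᵥ ((Aᵀ * (K * A) - L) *ᵥ x)
      = x ⬝ᵥ ((Aᵀ * (K * A)) *ᵥ x) - x ⬝ᵥ (L *ᵥ x) := by
    rw [Matrix.sub_mulVec, dotProduct_sub]
  rw [hL] at hq2 hq3
  rw [hz, hsub]
  linarith [hq, hq2, hq3]

lemma myInt_mul {Ω : Type*} {mΩ : MeasurableSpace Ω} {μ : Measure Ω}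
    {f g : Ω → ℝ} (hf : MemLp f 2 μ) (hg : MemLp g 2 μ) :
    Integrable (fun ω => f ω * g ω) μ := by
  rw [← memLp_one_iff_integrable]
  have := hg.smul (φ := f) hf (p := 2) (q := 2) (r := 1)
    (hpqr := ⟨by simp [ENNReal.inv_two_add_inv_two]⟩)
  simp only [smul_eq_mul] at this
  exact this

lemma myCondexp_memL2 {Ω : Type*} {G : MeasurableSpace Ω} {mΩ : MeasurableSpace Ω}
    {μ : Measure Ω} [IsProbabilityMeasure μ] (hG : G ≤ mΩ) {f : Ω → ℝ}
    (hf : MemLp f 2 μ) : MemLp (μ[f|G]) 2 μ := by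
  haveI : IsFiniteMeasure (μ.trim hG) := isFiniteMeasure_trim hG
  have hgL2 : MemLp (condExpL2 ℝ ℝ hG (hf.toLp f) : Ω → ℝ) 2 μ := Lp.memLp _
  have hfi : Integrable f μ := hf.integrable one_le_two
  have heq : (condExpL2 ℝ ℝ hG (hf.toLp f) : Ω → ℝ) =ᵐ[μ] μ[f|G] := by
    refine ae_eq_condExp_of_forall_setIntegral_eq hG hfi
      (fun s _ _ => (hgL2.integrable one_le_two).integrableOn) (fun s hs hμs => ?_)
      (aestronglyMeasurable_condExpL2 hG _)
    rw [integral_condExpL2_eq hG (hf.toLp f) hs hμs.ne]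
    exact setIntegral_congr_ae (hG s hs) ((hf.coeFn_toLp).mono fun x hx _ => hx)
  exact hgL2.ae_eq heq

lemma myCondexp_orth {Ω : Type*} {G : MeasurableSpace Ω} {mΩ : MeasurableSpace Ω}
    {μ : Measure Ω} [IsProbabilityMeasure μ] (hG : G ≤ mΩ) {g f : Ω → ℝ}
    (hgm : StronglyMeasurable[G] g) (hg : MemLp g 2 μ) (hf : MemLp f 2 μ) :
    ∫ ω, g ω * (f ω - (μ[f|G]) ω) ∂μ = 0 := by
  haveI : IsFiniteMeasure (μ.trim hG) := isFiniteMeasure_trim hG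
  have hfi : Integrable f μ := hf.integrable one_le_two
  have h1 : Integrable (fun ω => g ω * f ω) μ := myInt_mul hg hf
  have h2 : Integrable (fun ω => g ω * (μ[f|G]) ω) μ := myInt_mul hg (myCondexp_memL2 hG hf)
  have hmul : μ[(fun ω => g ω * f ω)|G] =ᵐ[μ] fun ω => g ω * (μ[f|G]) ω :=
    condExp_mul_of_stronglyMeasurable_left hgm h1 hfi
  have hI : ∫ ω, g ω * f ω ∂μ = ∫ ω, g ω * (μ[f|G]) ω ∂μ := by
    rw [← integral_condExp (f := fun ω => g ω * f ω) hG]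
    exact integral_congr_ae hmul
  have : (fun ω => g ω * (f ω - (μ[f|G]) ω)) = fun ω => g ω * f ω - g ω * (μ[f|G]) ω := by
    funext ω; ring
  rw [this, integral_sub h1 h2, hI, sub_self]

lemma myIndep_orth {Ω : Type*} {mΩ : MeasurableSpace Ω} {μ : Measure Ω}
    [IsProbabilityMeasure μ] {n : ℕ} {w : Ω → Fin n → ℝ} {M : MeasurableSpace Ω}
    (hindep : Indep (MeasurableSpace.comap w inferInstance) M μ)
    {h : Ω → ℝ} (hm : Measurable[M] h) (hh : MemLp h 2 μ)
    (j : Fin n) (hwL2 : MemLp (fun ω => w ω j) 2 μ)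
    (hwmean : ∫ ω, w ω j ∂μ = 0) :
    ∫ ω, h ω * w ω j ∂μ = 0 := by
  have hwj : Measurable[MeasurableSpace.comap w inferInstance] (fun ω => w ω j) :=
    (measurable_pi_apply j).comp (Measurable.of_comap_le le_rfl)
  have hIF : IndepFun h (fun ω => w ω j) μ := by
    have : Indep M (MeasurableSpace.comap w inferInstance) μ := hindep.symm
    exact indep_of_indep_of_le_left (indep_of_indep_of_le_right this hwj.comap_le) hm.comap_le
  have h2 := hIF.integral_mul_eq_mul_integral (hh.aestronglyMeasurable)
    (hwL2.aestronglyMeasurable)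
  rw [show (h * fun ω => w ω j) = (fun ω => h ω * w ω j) from rfl] at h2
  rw [h2, hwmean, mul_zero]

lemma quad_pt {k m : ℕ} {Ω : Type*} (M : Matrix (Fin k) (Fin m) ℝ)
    (f : Ω → Fin k → ℝ) (g : Ω → Fin m → ℝ) (ω : Ω) :
    f ω ⬝ᵥ (M *ᵥ g ω) = ∑ i, ∑ j, M i j * (f ω i * g ω j) := by
  simp only [dotProduct, Matrix.mulVec, Finset.mul_sum]
  exact Finset.sum_congr rfl fun i _ => Finset.sum_congr rfl fun j _ => by ring

lemma quad_integrable {k m : ℕ} {Ω : Type*} {mΩ : MeasurableSpace Ω} {μ : Measure Ω}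
    (M : Matrix (Fin k) (Fin m) ℝ) {f : Ω → Fin k → ℝ} {g : Ω → Fin m → ℝ}
    (hf : ∀ i, MemLp (fun ω => f ω i) 2 μ) (hg : ∀ j, MemLp (fun ω => g ω j) 2 μ) :
    Integrable (fun ω => f ω ⬝ᵥ (M *ᵥ g ω)) μ := by
  have : Integrable (fun ω => ∑ i, ∑ j, M i j * (f ω i * g ω j)) μ := by
    refine integrable_finset_sum _ fun i _ => integrable_finset_sum _ fun j _ => ?_
    exact (myInt_mul (hf i) (hg j)).const_mul _
  exact this.congr (Filter.Eventually.of_forall fun ω => (quad_pt M f g ω).symm)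

lemma quad_integral {k m : ℕ} {Ω : Type*} {mΩ : MeasurableSpace Ω} {μ : Measure Ω}
    (M : Matrix (Fin k) (Fin m) ℝ) {f : Ω → Fin k → ℝ} {g : Ω → Fin m → ℝ}
    (hf : ∀ i, MemLp (fun ω => f ω i) 2 μ) (hg : ∀ j, MemLp (fun ω => g ω j) 2 μ) :
    ∫ ω, f ω ⬝ᵥ (M *ᵥ g ω) ∂μ = ∑ i, ∑ j, M i j * ∫ ω, f ω i * g ω j ∂μ := by
  rw [integral_congr_ae (Filter.Eventually.of_forall fun ω => quad_pt M f g ω)]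
  rw [integral_finset_sum (f := fun i ω => ∑ j, M i j * (f ω i * g ω j)) _ fun i _ => integrable_finset_sum _ fun j _ =>
    (myInt_mul (hf i) (hg j)).const_mul _]
  refine Finset.sum_congr rfl fun i _ => ?_
  rw [integral_finset_sum (f := fun j ω => M i j * (f ω i * g ω j)) _ fun j _ => (myInt_mul (hf i) (hg j)).const_mul _]
  exact Finset.sum_congr rfl fun j _ => integral_const_mul _ _

lemma quad_integral_zero {k m : ℕ} {Ω : Type*} {mΩ : MeasurableSpace Ω} {μ : Measure Ω}
    (M : Matrix (Fin k) (Fin m) ℝ) {f : Ω → Fin k → ℝ} {g : Ω → Fin m → ℝ}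
    (hf : ∀ i, MemLp (fun ω => f ω i) 2 μ) (hg : ∀ j, MemLp (fun ω => g ω j) 2 μ)
    (h0 : ∀ i j, ∫ ω, f ω i * g ω j ∂μ = 0) :
    ∫ ω, f ω ⬝ᵥ (M *ᵥ g ω) ∂μ = 0 := by
  rw [quad_integral M hf hg]
  simp [h0]

end Helpers

/-- One-step Bellman minimization with partial state information: over all
`𝓖`-measurable square-integrable controls `U`, the functional
`U ↦ E[UᵀRU + (AX + BU + w)ᵀK(AX + BU + w)]` attains its minimum at `U = −V X̂`, with
minimum value `E[Xᵀ(AᵀKA − Λ)X] + E[εᵀΛε] + tr(KW)`, where `w` is a zero-mean noise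
with covariance `W` independent of the σ-algebra generated by `X` and `𝓖`. -/
theorem certainty_equivalence_min_with_noise {n s : ℕ}
    {Ω : Type*} {mΩ : MeasurableSpace Ω} (μ : Measure Ω) [IsProbabilityMeasure μ]
    (G : MeasurableSpace Ω) (hG : G ≤ mΩ)
    (X : Ω → Fin n → ℝ)
    (hX : ∀ i, MemLp (fun ω => X ω i) 2 μ)
    (R : Matrix (Fin s) (Fin s) ℝ) (K A : Matrix (Fin n) (Fin n) ℝ)
    (B : Matrix (Fin n) (Fin s) ℝ)
    (hR : R.PosDef) (hK : K.PosSemidef)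
    (w : Ω → Fin n → ℝ) (W : Matrix (Fin n) (Fin n) ℝ)
    (hwL2 : ∀ i, MemLp (fun ω => w ω i) 2 μ)
    (hwmean : ∀ i, ∫ ω, w ω i ∂μ = 0)
    (hwcov : ∀ i j, ∫ ω, w ω i * w ω j ∂μ = W i j)
    (hindep : Indep (MeasurableSpace.comap w inferInstance)
        ((MeasurableSpace.comap X inferInstance) ⊔ G) μ) :
    letI V : Matrix (Fin s) (Fin n) ℝ := (R + Bᵀ * K * B)⁻¹ * (Bᵀ * K * A)
    letI Λ : Matrix (Fin n) (Fin n) ℝ := Aᵀ * K * B * (R + Bᵀ * K * B)⁻¹ * (Bᵀ * K * A)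
    letI Xhat : Ω → Fin n → ℝ := fun ω i => (μ[fun ω' => X ω' i|G]) ω
    letI ε : Ω → Fin n → ℝ := fun ω => X ω - Xhat ω
    letI F : (Ω → Fin s → ℝ) → ℝ := fun U =>
      ∫ ω, (U ω ⬝ᵥ (R *ᵥ U ω)
        + (A *ᵥ X ω + B *ᵥ U ω + w ω) ⬝ᵥ (K *ᵥ (A *ᵥ X ω + B *ᵥ U ω + w ω))) ∂μ
    letI Ustar : Ω → Fin s → ℝ := fun ω => -(V *ᵥ Xhat ω)
    (∀ U : Ω → Fin s → ℝ, Measurable[G] U → (∀ i, MemLp (fun ω => U ω i) 2 μ) →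
        F Ustar ≤ F U)
      ∧ F Ustar = ∫ ω, X ω ⬝ᵥ ((Aᵀ * K * A - Λ) *ᵥ X ω) ∂μ
          + ∫ ω, ε ω ⬝ᵥ (Λ *ᵥ ε ω) ∂μ + (K * W).trace := by
  beta_reduce
  have hKt : Kᵀ = K := by
    rw [← Matrix.conjTranspose_eq_transpose_of_trivial]; exact hK.1
  have hRt : Rᵀ = R := by
    rw [← Matrix.conjTranspose_eq_transpose_of_trivial]; exact hR.1
  have hBKB : (Bᵀ * K * B).PosSemidef := by
    have h := hK.conjTranspose_mul_mul_same B
    rwa [Matrix.conjTranspose_eq_transpose_of_trivial] at h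
  have hSpd : (R + Bᵀ * K * B).PosDef := hR.add_posSemidef hBKB
  have hSS : (R + Bᵀ * K * B) * (R + Bᵀ * K * B)⁻¹ = 1 :=
    Matrix.mul_nonsing_inv _ hSpd.det_pos.ne'.isUnit
  have hSt : (R + Bᵀ * K * B)ᵀ = R + Bᵀ * K * B := by
    simp only [Matrix.transpose_add, Matrix.transpose_mul, Matrix.transpose_transpose,
      hRt, hKt, Matrix.mul_assoc]
  set S : Matrix (Fin s) (Fin s) ℝ := R + Bᵀ * K * B with hSdef
  set C : Matrix (Fin s) (Fin n) ℝ := Bᵀ * K * A with hCdef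
  set V : Matrix (Fin s) (Fin n) ℝ := S⁻¹ * C with hVdef
  set L : Matrix (Fin n) (Fin n) ℝ := Aᵀ * K * B * S⁻¹ * C with hLdef
  set Xh : Ω → Fin n → ℝ := fun ω i => (μ[fun ω' => X ω' i|G]) ω with hXhdef
  have hSV : S * V = C := by rw [hVdef, ← Matrix.mul_assoc, hSS, Matrix.one_mul]
  have hLC : Vᵀ * C = L := by
    rw [hVdef, hLdef, hCdef]
    simp only [Matrix.transpose_mul, Matrix.transpose_nonsing_inv, Matrix.transpose_transpose,
      hSt, hKt, Matrix.mul_assoc]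
  have hXh2 : ∀ i, MemLp (fun ω => Xh ω i) 2 μ := fun i => myCondexp_memL2 hG (hX i)
  have hXhsm : ∀ i, StronglyMeasurable[G] (fun ω => Xh ω i) := fun i =>
    stronglyMeasurable_condExp
  have hXhm : ∀ i, Measurable[G] (fun ω => Xh ω i) := fun i => (hXhsm i).measurable
  have he2 : ∀ i, MemLp (fun ω => (X ω - Xh ω) i) 2 μ := fun i => (hX i).sub (hXh2 i)
  have hXm : ∀ i, Measurable[MeasurableSpace.comap X inferInstance ⊔ G] (fun ω => X ω i) :=
    fun i => (measurable_pi_apply i).comp (Measurable.of_comap_le le_sup_left)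
  -- the key decomposition of the cost functional
  have key : ∀ U : Ω → Fin s → ℝ, Measurable[G] U → (∀ i, MemLp (fun ω => U ω i) 2 μ) →
      ∫ ω, (U ω ⬝ᵥ (R *ᵥ U ω)
          + (A *ᵥ X ω + B *ᵥ U ω + w ω) ⬝ᵥ (K *ᵥ (A *ᵥ X ω + B *ᵥ U ω + w ω))) ∂μ
      = ∫ ω, ((U ω + V *ᵥ Xh ω) ⬝ᵥ (S *ᵥ (U ω + V *ᵥ Xh ω))) ∂μ
        + (∫ ω, X ω ⬝ᵥ ((Aᵀ * K * A - L) *ᵥ X ω) ∂μ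
          + ∫ ω, (X ω - Xh ω) ⬝ᵥ (L *ᵥ (X ω - Xh ω)) ∂μ + (K * W).trace) := by
    intro U hUm hU2
    have hUim : ∀ i, Measurable[G] (fun ω => U ω i) := fun i =>
      (measurable_pi_apply i).comp hUm
    have hD2 : ∀ i, MemLp (fun ω => (U ω + V *ᵥ Xh ω) i) 2 μ := by
      intro i
      have hrw : (fun ω => (U ω + V *ᵥ Xh ω) i) = fun ω => U ω i + ∑ j, V i j * Xh ω j := by
        funext ω; simp [Matrix.mulVec, dotProduct]
      rw [hrw]
      exact (hU2 i).add (memLp_finset_sum _ fun j _ => (hXh2 j).const_mul (V i j))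
    have hDsm : ∀ i, StronglyMeasurable[G] (fun ω => (U ω + V *ᵥ Xh ω) i) := by
      intro i
      have hrw : (fun ω => (U ω + V *ᵥ Xh ω) i) = fun ω => U ω i + ∑ j, V i j * Xh ω j := by
        funext ω; simp [Matrix.mulVec, dotProduct]
      rw [hrw]
      exact ((hUim i).stronglyMeasurable).add
        (Finset.stronglyMeasurable_fun_sum _ fun j _ => (hXhsm j).const_mul (V i j))
    have hP2 : ∀ i, MemLp (fun ω => (A *ᵥ X ω + B *ᵥ U ω) i) 2 μ := by
      intro i
      have hrw : (fun ω => (A *ᵥ X ω + B *ᵥ U ω) i)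
          = fun ω => (∑ j, A i j * X ω j) + ∑ j, B i j * U ω j := by
        funext ω; simp [Matrix.mulVec, dotProduct]
      rw [hrw]
      exact (memLp_finset_sum _ fun j _ => (hX j).const_mul (A i j)).add
        (memLp_finset_sum _ fun j _ => (hU2 j).const_mul (B i j))
    have hPm : ∀ i, Measurable[MeasurableSpace.comap X inferInstance ⊔ G]
        (fun ω => (A *ᵥ X ω + B *ᵥ U ω) i) := by
      intro i
      have hrw : (fun ω => (A *ᵥ X ω + B *ᵥ U ω) i)
          = fun ω => (∑ j, A i j * X ω j) + ∑ j, B i j * U ω j := by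
        funext ω; simp [Matrix.mulVec, dotProduct]
      rw [hrw]
      refine Measurable.add ?_ ?_
      · exact Finset.measurable_sum _ fun j _ => ((hXm j).const_mul (A i j))
      · exact Finset.measurable_sum _ fun j _ =>
          (((hUim j).mono le_sup_right le_rfl).const_mul (B i j))
    have hpt : ∀ ω, U ω ⬝ᵥ (R *ᵥ U ω)
          + (A *ᵥ X ω + B *ᵥ U ω + w ω) ⬝ᵥ (K *ᵥ (A *ᵥ X ω + B *ᵥ U ω + w ω))
        = (U ω + V *ᵥ Xh ω) ⬝ᵥ (S *ᵥ (U ω + V *ᵥ Xh ω))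
          + 2 * ((U ω + V *ᵥ Xh ω) ⬝ᵥ (C *ᵥ (X ω - Xh ω)))
          + (X ω - Xh ω) ⬝ᵥ (L *ᵥ (X ω - Xh ω))
          + X ω ⬝ᵥ ((Aᵀ * K * A - L) *ᵥ X ω)
          + 2 * ((A *ᵥ X ω + B *ᵥ U ω) ⬝ᵥ (K *ᵥ w ω))
          + w ω ⬝ᵥ (K *ᵥ w ω) := by
      intro ω
      have h := key_alg R S K A L B V C hRt hKt
        (by rw [hSdef, Matrix.mul_assoc]) (by rw [hCdef, Matrix.mul_assoc]) hSt hSV hLC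
        (U ω) (X ω) (Xh ω) (w ω)
      rw [show Aᵀ * (K * A) = Aᵀ * K * A from (Matrix.mul_assoc _ _ _).symm] at h
      exact h
    have i1 : Integrable (fun ω => (U ω + V *ᵥ Xh ω) ⬝ᵥ (S *ᵥ (U ω + V *ᵥ Xh ω))) μ :=
      quad_integrable S hD2 hD2
    have i2 : Integrable (fun ω => 2 * ((U ω + V *ᵥ Xh ω) ⬝ᵥ (C *ᵥ (X ω - Xh ω)))) μ :=
      (quad_integrable C hD2 he2).const_mul 2
    have i3 : Integrable (fun ω => (X ω - Xh ω) ⬝ᵥ (L *ᵥ (X ω - Xh ω))) μ :=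
      quad_integrable L he2 he2
    have i4 : Integrable (fun ω => X ω ⬝ᵥ ((Aᵀ * K * A - L) *ᵥ X ω)) μ :=
      quad_integrable _ hX hX
    have i5 : Integrable (fun ω => 2 * ((A *ᵥ X ω + B *ᵥ U ω) ⬝ᵥ (K *ᵥ w ω))) μ :=
      (quad_integrable K hP2 hwL2).const_mul 2
    have i6 : Integrable (fun ω => w ω ⬝ᵥ (K *ᵥ w ω)) μ := quad_integrable K hwL2 hwL2
    rw [integral_congr_ae (Filter.Eventually.of_forall hpt)]
    have s6 : ∫ ω, ((U ω + V *ᵥ Xh ω) ⬝ᵥ (S *ᵥ (U ω + V *ᵥ Xh ω)) + 2 * ((U ω + V *ᵥ Xh ω) ⬝ᵥ (C *ᵥ (X ω - Xh ω))) + (X ω - Xh ω) ⬝ᵥ (L *ᵥ (X ω - Xh ω)) + X ω ⬝ᵥ ((Aᵀ * K * A - L) *ᵥ X ω) + 2 * ((A *ᵥ X ω + B *ᵥ U ω) ⬝ᵥ (K *ᵥ w ω)) + w ω ⬝ᵥ (K *ᵥ w ω)) ∂μ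
        = ∫ ω, ((U ω + V *ᵥ Xh ω) ⬝ᵥ (S *ᵥ (U ω + V *ᵥ Xh ω)) + 2 * ((U ω + V *ᵥ Xh ω) ⬝ᵥ (C *ᵥ (X ω - Xh ω))) + (X ω - Xh ω) ⬝ᵥ (L *ᵥ (X ω - Xh ω)) + X ω ⬝ᵥ ((Aᵀ * K * A - L) *ᵥ X ω) + 2 * ((A *ᵥ X ω + B *ᵥ U ω) ⬝ᵥ (K *ᵥ w ω))) ∂μ + ∫ ω, w ω ⬝ᵥ (K *ᵥ w ω) ∂μ :=
      integral_add ((((i1.add i2).add i3).add i4).add i5) i6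
    have s5 : ∫ ω, ((U ω + V *ᵥ Xh ω) ⬝ᵥ (S *ᵥ (U ω + V *ᵥ Xh ω)) + 2 * ((U ω + V *ᵥ Xh ω) ⬝ᵥ (C *ᵥ (X ω - Xh ω))) + (X ω - Xh ω) ⬝ᵥ (L *ᵥ (X ω - Xh ω)) + X ω ⬝ᵥ ((Aᵀ * K * A - L) *ᵥ X ω) + 2 * ((A *ᵥ X ω + B *ᵥ U ω) ⬝ᵥ (K *ᵥ w ω))) ∂μ
        = ∫ ω, ((U ω + V *ᵥ Xh ω) ⬝ᵥ (S *ᵥ (U ω + V *ᵥ Xh ω)) + 2 * ((U ω + V *ᵥ Xh ω) ⬝ᵥ (C *ᵥ (X ω - Xh ω))) + (X ω - Xh ω) ⬝ᵥ (L *ᵥ (X ω - Xh ω)) + X ω ⬝ᵥ ((Aᵀ * K * A - L) *ᵥ X ω)) ∂μ + ∫ ω, 2 * ((A *ᵥ X ω + B *ᵥ U ω) ⬝ᵥ (K *ᵥ w ω)) ∂μ :=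
      integral_add (((i1.add i2).add i3).add i4) i5
    have s4 : ∫ ω, ((U ω + V *ᵥ Xh ω) ⬝ᵥ (S *ᵥ (U ω + V *ᵥ Xh ω)) + 2 * ((U ω + V *ᵥ Xh ω) ⬝ᵥ (C *ᵥ (X ω - Xh ω))) + (X ω - Xh ω) ⬝ᵥ (L *ᵥ (X ω - Xh ω)) + X ω ⬝ᵥ ((Aᵀ * K * A - L) *ᵥ X ω)) ∂μ
        = ∫ ω, ((U ω + V *ᵥ Xh ω) ⬝ᵥ (S *ᵥ (U ω + V *ᵥ Xh ω)) + 2 * ((U ω + V *ᵥ Xh ω) ⬝ᵥ (C *ᵥ (X ω - Xh ω))) + (X ω - Xh ω) ⬝ᵥ (L *ᵥ (X ω - Xh ω))) ∂μ + ∫ ω, X ω ⬝ᵥ ((Aᵀ * K * A - L) *ᵥ X ω) ∂μ :=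
      integral_add ((i1.add i2).add i3) i4
    have s3 : ∫ ω, ((U ω + V *ᵥ Xh ω) ⬝ᵥ (S *ᵥ (U ω + V *ᵥ Xh ω)) + 2 * ((U ω + V *ᵥ Xh ω) ⬝ᵥ (C *ᵥ (X ω - Xh ω))) + (X ω - Xh ω) ⬝ᵥ (L *ᵥ (X ω - Xh ω))) ∂μ
        = ∫ ω, ((U ω + V *ᵥ Xh ω) ⬝ᵥ (S *ᵥ (U ω + V *ᵥ Xh ω)) + 2 * ((U ω + V *ᵥ Xh ω) ⬝ᵥ (C *ᵥ (X ω - Xh ω)))) ∂μ + ∫ ω, (X ω - Xh ω) ⬝ᵥ (L *ᵥ (X ω - Xh ω)) ∂μ :=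
      integral_add (i1.add i2) i3
    have s2 : ∫ ω, ((U ω + V *ᵥ Xh ω) ⬝ᵥ (S *ᵥ (U ω + V *ᵥ Xh ω)) + 2 * ((U ω + V *ᵥ Xh ω) ⬝ᵥ (C *ᵥ (X ω - Xh ω)))) ∂μ
        = ∫ ω, ((U ω + V *ᵥ Xh ω) ⬝ᵥ (S *ᵥ (U ω + V *ᵥ Xh ω))) ∂μ + ∫ ω, 2 * ((U ω + V *ᵥ Xh ω) ⬝ᵥ (C *ᵥ (X ω - Xh ω))) ∂μ :=
      integral_add (i1) i2
    rw [s6, s5, s4, s3, s2]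
    have z2 : ∫ ω, 2 * ((U ω + V *ᵥ Xh ω) ⬝ᵥ (C *ᵥ (X ω - Xh ω))) ∂μ = 0 := by
      rw [integral_const_mul]
      rw [quad_integral_zero C hD2 he2 fun i j =>
        myCondexp_orth hG (hDsm i) (hD2 i) (hX j), mul_zero]
    have z5 : ∫ ω, 2 * ((A *ᵥ X ω + B *ᵥ U ω) ⬝ᵥ (K *ᵥ w ω)) ∂μ = 0 := by
      rw [integral_const_mul]
      rw [quad_integral_zero K hP2 hwL2 fun i j =>
        myIndep_orth hindep (hPm i) (hP2 i) j (hwL2 j) (hwmean j), mul_zero]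
    have z6 : ∫ ω, w ω ⬝ᵥ (K *ᵥ w ω) ∂μ = (K * W).trace := by
      have hWs : ∀ i j, W i j = W j i := fun i j => by
        rw [← hwcov i j, ← hwcov j i]
        exact integral_congr_ae (Filter.Eventually.of_forall fun ω => mul_comm _ _)
      rw [quad_integral K hwL2 hwL2]
      simp only [hwcov, Matrix.trace, Matrix.diag, Matrix.mul_apply]
      exact Finset.sum_congr rfl fun i _ => Finset.sum_congr rfl fun j _ => by rw [hWs i j]
    rw [z2, z5, z6]
    ring
  -- properties of the optimal control
  have hUstarm : Measurable[G] (fun ω => -(V *ᵥ Xh ω)) := by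
    refine measurable_pi_lambda _ fun i => ?_
    have hrw : (fun ω => (-(V *ᵥ Xh ω)) i) = fun ω => -(∑ j, V i j * Xh ω j) := by
      funext ω; simp [Matrix.mulVec, dotProduct]
    rw [hrw]
    exact (Finset.measurable_sum _ fun j _ => ((hXhm j).const_mul (V i j))).neg
  have hUstar2 : ∀ i, MemLp (fun ω => (-(V *ᵥ Xh ω)) i) 2 μ := by
    intro i
    have hrw : (fun ω => (-(V *ᵥ Xh ω)) i) = fun ω => -(∑ j, V i j * Xh ω j) := by
      funext ω; simp [Matrix.mulVec, dotProduct]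
    rw [hrw]
    exact (memLp_finset_sum _ fun j _ => (hXh2 j).const_mul (V i j)).neg
  have hstar0 : ∫ ω, ((-(V *ᵥ Xh ω) + V *ᵥ Xh ω) ⬝ᵥ (S *ᵥ (-(V *ᵥ Xh ω) + V *ᵥ Xh ω))) ∂μ
      = 0 := by
    have : ∀ ω : Ω, (-(V *ᵥ Xh ω) + V *ᵥ Xh ω) ⬝ᵥ (S *ᵥ (-(V *ᵥ Xh ω) + V *ᵥ Xh ω))
        = 0 := by
      intro ω
      simp
    rw [integral_congr_ae (Filter.Eventually.of_forall this)]
    simp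
  have hFstar := key _ hUstarm hUstar2
  rw [hstar0, zero_add] at hFstar
  constructor
  · intro U hUm hU2
    rw [hFstar, key U hUm hU2]
    have hpos : 0 ≤ ∫ ω, ((U ω + V *ᵥ Xh ω) ⬝ᵥ (S *ᵥ (U ω + V *ᵥ Xh ω))) ∂μ := by
      refine integral_nonneg fun ω => ?_
      have h := hSpd.posSemidef.dotProduct_mulVec_nonneg (U ω + V *ᵥ Xh ω)
      simpa using h
    linarith
  · rw [hFstar]
end
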